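/- arXiv:0907.2297 — 5 statements merged into one kernel-verified Lean document; each statement's English description precedes it below -/
import Mathlib

section
/- Let n₀ ≥ 2, let (u_j)_{j≥n₀} and (β_j)_{j≥n₀} be nonnegative sequences with ∑_{j≥n₀} j β_j u_j < ∞, let k_{i,j} satisfy k_{i,j} ≥ 0, k_{i,j} = 0 for i ≥ j, k_{i,j} = k_{j−i,j} and ∑_{i=1}^{j−1} k_{i,j} = 1 (hence 2∑_{i=1}^{j−1} i k_{i,j} = j), and let (φ_i)_{i≥1} be a sequence with |φ_i| ≤ C i for some C. Then 2 ∑_{i=n₀}^∞ φ_i ∑_{j>i} β_j k_{i,j} u_j − ∑_{i=n₀}^∞ β_i u_i φ_i = 2 ∑_{j=n₀+1}^∞ ∑_{i=n₀}^{j−1} i k_{i,j} β_j u_j (φ_i/i − φ_j/j) − 2 ∑_{j=n₀}^∞ ∑_{i=1}^{n₀−1} i k_{i,j} β_j u_j (φ_j/j). -/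
/-- rearrangement of the fragmentation terms: with `n₀ ≥ 2`, nonnegative
sequences `u, β` with `∑_{j ≥ n₀} j β_j u_j < ∞`, a fragmentation kernel `k` satisfying
nonnegativity, vanishing for `i ≥ j`, symmetry and normalization (hence
`2 ∑_{i=1}^{j-1} i k_{i,j} = j`), and weights `|φ_i| ≤ C i`, one has
`2 ∑_{i ≥ n₀} φ_i ∑_{j > i} β_j k_{i,j} u_j - ∑_{i ≥ n₀} β_i u_i φ_i
  = 2 ∑_{j ≥ n₀+1} ∑_{i=n₀}^{j-1} i k_{i,j} β_j u_j (φ_i/i - φ_j/j)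
    - 2 ∑_{j ≥ n₀} ∑_{i=1}^{n₀-1} i k_{i,j} β_j u_j (φ_j/j)`. -/
theorem fragmentation_rearrangement (n₀ : ℕ) (hn₀ : 2 ≤ n₀)
    (u β : ℕ → ℝ) (hu : ∀ j, 0 ≤ u j) (hβ : ∀ j, 0 ≤ β j)
    (hsum : Summable fun j : ℕ => if n₀ ≤ j then (j : ℝ) * β j * u j else 0)
    (k : ℕ → ℕ → ℝ)
    (hk0 : ∀ i j, 0 ≤ k i j)
    (hksupp : ∀ i j, j ≤ i → k i j = 0)
    (hksymm : ∀ i j, 1 ≤ i → i ≤ j - 1 → k i j = k (j - i) j)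
    (hknorm : ∀ j, 2 ≤ j → ∑ i ∈ Finset.Ico 1 j, k i j = 1)
    (φ : ℕ → ℝ) (C : ℝ) (hφ : ∀ i, |φ i| ≤ C * i) :
    2 * (∑' i, if n₀ ≤ i then φ i * ∑' j, (if i < j then β j * k i j * u j else 0) else 0)
      - (∑' i, if n₀ ≤ i then β i * u i * φ i else 0)
    = 2 * (∑' j, if n₀ + 1 ≤ j then
          ∑ i ∈ Finset.Ico n₀ j, (i : ℝ) * k i j * β j * u j * (φ i / i - φ j / j)
        else 0)
      - 2 * ∑' j, (if n₀ ≤ j then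
          (∑ i ∈ Finset.Ico 1 n₀, (i : ℝ) * k i j) * β j * u j * (φ j / j) else 0) := by
  classical
  have hC : 0 ≤ C := by
    have h := hφ 1
    simp only [Nat.cast_one, mul_one] at h
    exact (abs_nonneg _).trans h
  set M : ℕ → ℝ := fun j => if n₀ ≤ j then (j : ℝ) * β j * u j else 0 with hM_def
  have hM : Summable M := hsum
  have hM0 : ∀ j, 0 ≤ M j := by
    intro j
    simp only [hM_def]
    split
    · exact mul_nonneg (mul_nonneg (Nat.cast_nonneg j) (hβ j)) (hu j)
    · exact le_refl 0
  -- key moment identity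
  have key : ∀ j : ℕ, 2 ≤ j → ∑ i ∈ Finset.Ico 1 j, (i : ℝ) * k i j = (j : ℝ) / 2 := by
    intro j hj
    have hswap : ∑ i ∈ Finset.Ico 1 j, ((j : ℝ) - i) * k i j
        = ∑ i ∈ Finset.Ico 1 j, (i : ℝ) * k i j := by
      refine Finset.sum_nbij' (fun i => j - i) (fun i => j - i) ?_ ?_ ?_ ?_ ?_
      · intro a ha
        simp only [Finset.mem_Ico] at ha ⊢
        omega
      · intro a ha
        simp only [Finset.mem_Ico] at ha ⊢
        omega
      · intro a ha; simp only [Finset.mem_Ico] at ha; show j - (j - a) = a; omega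
      · intro a ha; simp only [Finset.mem_Ico] at ha; show j - (j - a) = a; omega
      · intro a ha
        simp only [Finset.mem_Ico] at ha
        have h1 : k a j = k (j - a) j := hksymm a j ha.1 (by omega)
        rw [Nat.cast_sub (le_of_lt ha.2), h1]
    have h2 : ∑ i ∈ Finset.Ico 1 j, ((j : ℝ) - i) * k i j
        + ∑ i ∈ Finset.Ico 1 j, (i : ℝ) * k i j = j := by
      rw [← Finset.sum_add_distrib]
      have : ∀ i ∈ Finset.Ico 1 j, ((j : ℝ) - i) * k i j + (i : ℝ) * k i j
          = (j : ℝ) * k i j := by intro i _; ring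
      rw [Finset.sum_congr rfl this, ← Finset.mul_sum, hknorm j hj, mul_one]
    rw [hswap] at h2
    linarith
  -- bound for partial moment sums
  have hbnd : ∀ (j : ℕ) (s : Finset ℕ), s ⊆ Finset.Ico 1 j →
      ∑ i ∈ s, (i : ℝ) * k i j ≤ j := by
    intro j s hs
    have h1 : ∑ i ∈ s, (i : ℝ) * k i j ≤ ∑ i ∈ Finset.Ico 1 j, (i : ℝ) * k i j :=
      Finset.sum_le_sum_of_subset_of_nonneg hs (fun i _ _ => mul_nonneg (Nat.cast_nonneg i) (hk0 i j))
    rcases le_or_gt 2 j with h | h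
    · rw [key j h] at h1
      have : (j : ℝ) / 2 ≤ j := by
        have : (0 : ℝ) ≤ j := Nat.cast_nonneg j
        linarith
      linarith
    · have he : Finset.Ico 1 j = ∅ := Finset.Ico_eq_empty (by omega)
      rw [he, Finset.sum_empty] at h1
      have : (0 : ℝ) ≤ j := Nat.cast_nonneg j
      linarith
  have hφd : ∀ j : ℕ, 1 ≤ j → |φ j / j| ≤ C := by
    intro j hj
    have hj0 : (0 : ℝ) < j := by exact_mod_cast hj
    rw [abs_div, abs_of_pos hj0, div_le_iff₀ hj0]
    exact hφ j
  -- the per-j sequences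
  set T : ℕ → ℝ := fun j => ∑ i ∈ Finset.Ico n₀ j, φ i * (β j * k i j * u j) with hT_def
  set Q : ℕ → ℝ := fun j =>
    (∑ i ∈ Finset.Ico n₀ j, (i : ℝ) * k i j) * β j * u j * (φ j / j) with hQ_def
  set S2 : ℕ → ℝ := fun j => if n₀ ≤ j then
    (∑ i ∈ Finset.Ico 1 n₀, (i : ℝ) * k i j) * β j * u j * (φ j / j) else 0 with hS2_def
  set B : ℕ → ℝ := fun j => if n₀ ≤ j then β j * u j * φ j else 0 with hB_def
  have sum_of_bound : ∀ f : ℕ → ℝ, (∀ j, |f j| ≤ C * M j) → Summable f := fun f hf =>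
    (Summable.of_nonneg_of_le (fun j => abs_nonneg _) hf (hM.mul_left C)).of_abs
  -- summability of T
  have hTb : ∀ j, |T j| ≤ C * M j := by
    intro j
    rcases lt_or_ge j (n₀ + 1) with h | h
    · have he : Finset.Ico n₀ j = ∅ := Finset.Ico_eq_empty (by omega)
      simp only [hT_def, he, Finset.sum_empty, abs_zero]
      exact mul_nonneg hC (hM0 j)
    · have hj : n₀ ≤ j := by omega
      have hMj : M j = (j : ℝ) * β j * u j := if_pos hj
      calc |T j| ≤ ∑ i ∈ Finset.Ico n₀ j, |φ i * (β j * k i j * u j)| :=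
            Finset.abs_sum_le_sum_abs _ _
        _ ≤ ∑ i ∈ Finset.Ico n₀ j, C * β j * u j * ((i : ℝ) * k i j) := by
            refine Finset.sum_le_sum fun i _ => ?_
            have hx : (0:ℝ) ≤ β j * k i j * u j :=
              mul_nonneg (mul_nonneg (hβ j) (hk0 i j)) (hu j)
            rw [abs_mul, abs_of_nonneg hx]
            calc |φ i| * (β j * k i j * u j)
                ≤ (C * i) * (β j * k i j * u j) :=
                  mul_le_mul_of_nonneg_right (hφ i) hx
              _ = C * β j * u j * ((i : ℝ) * k i j) := by ring
        _ = C * β j * u j * ∑ i ∈ Finset.Ico n₀ j, (i : ℝ) * k i j := by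
            rw [Finset.mul_sum]
        _ ≤ C * β j * u j * j :=
            mul_le_mul_of_nonneg_left (hbnd j _ (Finset.Ico_subset_Ico (by omega) le_rfl))
              (mul_nonneg (mul_nonneg hC (hβ j)) (hu j))
        _ = C * M j := by rw [hMj]; ring
  have hTs : Summable T := sum_of_bound T hTb
  -- summability of Q
  have hQb : ∀ j, |Q j| ≤ C * M j := by
    intro j
    rcases lt_or_ge j (n₀ + 1) with h | h
    · have he : Finset.Ico n₀ j = ∅ := Finset.Ico_eq_empty (by omega)
      simp only [hQ_def, he, Finset.sum_empty, zero_mul, abs_zero]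
      exact mul_nonneg hC (hM0 j)
    · have hj : n₀ ≤ j := by omega
      have hMj : M j = (j : ℝ) * β j * u j := if_pos hj
      have hsn : 0 ≤ ∑ i ∈ Finset.Ico n₀ j, (i : ℝ) * k i j :=
        Finset.sum_nonneg fun i _ => mul_nonneg (Nat.cast_nonneg i) (hk0 i j)
      rw [hQ_def]
      simp only
      rw [abs_mul, abs_mul, abs_mul, abs_of_nonneg hsn, abs_of_nonneg (hβ j),
        abs_of_nonneg (hu j)]
      calc (∑ i ∈ Finset.Ico n₀ j, (i : ℝ) * k i j) * β j * u j * |φ j / j|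
          ≤ (j : ℝ) * β j * u j * C := by
            have h1 := hbnd j _ (Finset.Ico_subset_Ico (α := ℕ) (by omega : 1 ≤ n₀) (le_refl j))
            have h2 := hφd j (by omega)
            refine mul_le_mul ?_ h2 (abs_nonneg _) ?_
            · exact mul_le_mul_of_nonneg_right
                (mul_le_mul_of_nonneg_right h1 (hβ j)) (hu j)
            · exact mul_nonneg (mul_nonneg (Nat.cast_nonneg j) (hβ j)) (hu j)
        _ = C * M j := by rw [hMj]; ring
  have hQs : Summable Q := sum_of_bound Q hQb
  -- summability of S2
  have hS2b : ∀ j, |S2 j| ≤ C * M j := by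
    intro j
    rcases lt_or_ge j n₀ with h | h
    · simp only [hS2_def, if_neg (by omega : ¬ n₀ ≤ j), abs_zero]
      exact mul_nonneg hC (hM0 j)
    · have hMj : M j = (j : ℝ) * β j * u j := if_pos h
      have hsn : 0 ≤ ∑ i ∈ Finset.Ico 1 n₀, (i : ℝ) * k i j :=
        Finset.sum_nonneg fun i _ => mul_nonneg (Nat.cast_nonneg i) (hk0 i j)
      simp only [hS2_def, if_pos h]
      rw [abs_mul, abs_mul, abs_mul, abs_of_nonneg hsn, abs_of_nonneg (hβ j),
        abs_of_nonneg (hu j)]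
      calc (∑ i ∈ Finset.Ico 1 n₀, (i : ℝ) * k i j) * β j * u j * |φ j / j|
          ≤ (j : ℝ) * β j * u j * C := by
            have h1 := hbnd j _ (Finset.Ico_subset_Ico (le_refl 1) h)
            have h2 := hφd j (by omega)
            refine mul_le_mul ?_ h2 (abs_nonneg _) ?_
            · exact mul_le_mul_of_nonneg_right
                (mul_le_mul_of_nonneg_right h1 (hβ j)) (hu j)
            · exact mul_nonneg (mul_nonneg (Nat.cast_nonneg j) (hβ j)) (hu j)
        _ = C * M j := by rw [hMj]; ring
  have hS2s : Summable S2 := sum_of_bound S2 hS2b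
  -- summability of B
  have hBb : ∀ j, |B j| ≤ C * M j := by
    intro j
    rcases lt_or_ge j n₀ with h | h
    · simp only [hB_def, if_neg (by omega : ¬ n₀ ≤ j), abs_zero]
      exact mul_nonneg hC (hM0 j)
    · have hMj : M j = (j : ℝ) * β j * u j := if_pos h
      simp only [hB_def, if_pos h]
      rw [abs_mul, abs_mul, abs_of_nonneg (hβ j), abs_of_nonneg (hu j)]
      calc β j * u j * |φ j| ≤ β j * u j * (C * j) :=
            mul_le_mul_of_nonneg_left (hφ j) (mul_nonneg (hβ j) (hu j))
        _ = C * M j := by rw [hMj]; ring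
  have hBs : Summable B := sum_of_bound B hBb
  -- per-j identity: 2 Q + 2 S2 = B
  have hQS2B : ∀ j, 2 * Q j + 2 * S2 j = B j := by
    intro j
    rcases lt_or_ge j n₀ with h | h
    · have he : Finset.Ico n₀ j = ∅ := Finset.Ico_eq_empty (by omega)
      simp [hQ_def, hS2_def, hB_def, he, if_neg (by omega : ¬ n₀ ≤ j)]
    · have hj2 : 2 ≤ j := le_trans hn₀ h
      have hIco : ∑ i ∈ Finset.Ico 1 n₀, (i : ℝ) * k i j
          + ∑ i ∈ Finset.Ico n₀ j, (i : ℝ) * k i j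
          = ∑ i ∈ Finset.Ico 1 j, (i : ℝ) * k i j :=
        Finset.sum_Ico_consecutive _ (by omega) h
      have hkj := key j hj2
      have hjne : (j : ℝ) ≠ 0 := Nat.cast_ne_zero.mpr (by omega)
      have hQval : (∑ i ∈ Finset.Ico n₀ j, (i : ℝ) * k i j)
          = (j : ℝ) / 2 - ∑ i ∈ Finset.Ico 1 n₀, (i : ℝ) * k i j := by
        rw [← hkj, ← hIco]; ring
      simp only [hQ_def, hS2_def, hB_def, if_pos h]
      rw [hQval]
      field_simp
      ring
  -- per-j identity: S1 = T - Q
  have hS1TQ : ∀ j, (if n₀ + 1 ≤ j then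
      ∑ i ∈ Finset.Ico n₀ j, (i : ℝ) * k i j * β j * u j * (φ i / i - φ j / j)
      else 0) = T j - Q j := by
    intro j
    rcases lt_or_ge j (n₀ + 1) with h | h
    · have he : Finset.Ico n₀ j = ∅ := Finset.Ico_eq_empty (by omega)
      simp [hT_def, hQ_def, he, if_neg (by omega : ¬ n₀ + 1 ≤ j)]
    · rw [if_pos h]
      have hterm : ∀ i ∈ Finset.Ico n₀ j,
          (i : ℝ) * k i j * β j * u j * (φ i / i - φ j / j)
          = φ i * (β j * k i j * u j)
            - (i : ℝ) * k i j * (β j * u j * (φ j / j)) := by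
        intro i hi
        obtain ⟨hi1, _⟩ := Finset.mem_Ico.mp hi
        have hine : (i : ℝ) ≠ 0 := Nat.cast_ne_zero.mpr (by omega)
        have hjne : (j : ℝ) ≠ 0 := Nat.cast_ne_zero.mpr (by omega)
        field_simp
      rw [Finset.sum_congr rfl hterm, Finset.sum_sub_distrib]
      simp only [hT_def, hQ_def]
      congr 1
      rw [← Finset.sum_mul]
      ring
  -- Fubini for the first LHS term
  set f : ℕ → ℕ → ℝ := fun i j =>
    if n₀ ≤ i ∧ i < j then φ i * (β j * k i j * u j) else 0 with hf_def
  set G' : ℕ × ℕ → ℝ := fun p =>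
    if n₀ ≤ p.2 ∧ p.2 < p.1 then C * p.2 * (β p.1 * k p.2 p.1 * u p.1) else 0 with hG'_def
  have hG'0 : ∀ p, 0 ≤ G' p := by
    intro p
    simp only [hG'_def]
    split
    · exact mul_nonneg (mul_nonneg hC (Nat.cast_nonneg _))
        (mul_nonneg (mul_nonneg (hβ _) (hk0 _ _)) (hu _))
    · exact le_refl 0
  have hG'row0 : ∀ j i, i ∉ Finset.Ico n₀ j → G' (j, i) = 0 := by
    intro j i hi
    simp only [Finset.mem_Ico, not_and_or, not_le, not_lt] at hi
    simp only [hG'_def]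
    rw [if_neg]
    rintro ⟨h1, h2⟩
    rcases hi with h | h
    · omega
    · omega
  have hG'rowsum : ∀ j, Summable fun i => G' (j, i) := fun j =>
    summable_of_ne_finset_zero (hG'row0 j)
  have hG'rowval : ∀ j, ∑' i, G' (j, i)
      = C * β j * u j * ∑ i ∈ Finset.Ico n₀ j, (i : ℝ) * k i j := by
    intro j
    rw [tsum_eq_sum (hG'row0 j), Finset.mul_sum]
    refine Finset.sum_congr rfl fun i hi => ?_
    obtain ⟨h1, h2⟩ := Finset.mem_Ico.mp hi
    simp only [hG'_def]
    rw [if_pos ⟨h1, h2⟩]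
    ring
  have hG's : Summable G' := by
    rw [summable_prod_of_nonneg hG'0]
    refine ⟨hG'rowsum, ?_⟩
    refine Summable.of_nonneg_of_le (fun j => ?_) (fun j => ?_) (hM.mul_left C)
    · rw [hG'rowval]
      have hsn : 0 ≤ ∑ i ∈ Finset.Ico n₀ j, (i : ℝ) * k i j :=
        Finset.sum_nonneg fun i _ => mul_nonneg (Nat.cast_nonneg i) (hk0 i j)
      exact mul_nonneg (mul_nonneg (mul_nonneg hC (hβ j)) (hu j)) hsn
    · rw [hG'rowval]
      rcases lt_or_ge j (n₀ + 1) with h | h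
      · have he : Finset.Ico n₀ j = ∅ := Finset.Ico_eq_empty (by omega)
        rw [he, Finset.sum_empty, mul_zero]
        exact mul_nonneg hC (hM0 j)
      · have hj : n₀ ≤ j := by omega
        have hMj : M j = (j : ℝ) * β j * u j := if_pos hj
        calc C * β j * u j * ∑ i ∈ Finset.Ico n₀ j, (i : ℝ) * k i j
            ≤ C * β j * u j * j :=
              mul_le_mul_of_nonneg_left (hbnd j _ (Finset.Ico_subset_Ico (by omega) le_rfl))
                (mul_nonneg (mul_nonneg hC (hβ j)) (hu j))
          _ = C * M j := by rw [hMj]; ring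
  have hFs : Summable (Function.uncurry f) := by
    refine Summable.of_abs ?_
    refine Summable.of_nonneg_of_le (fun p => abs_nonneg _) (fun p => ?_) hG's.prod_symm
    simp only [Function.uncurry, hf_def, hG'_def, Prod.fst_swap, Prod.snd_swap]
    split
    · rename_i hcond
      have hx : (0:ℝ) ≤ β p.2 * k p.1 p.2 * u p.2 :=
        mul_nonneg (mul_nonneg (hβ _) (hk0 _ _)) (hu _)
      rw [abs_mul, abs_of_nonneg hx]
      exact (mul_le_mul_of_nonneg_right (hφ p.1) hx).trans_eq (by ring)
    · simp
  have hstep1 : ∀ i, (if n₀ ≤ i then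
      φ i * ∑' j, (if i < j then β j * k i j * u j else 0) else 0) = ∑' j, f i j := by
    intro i
    by_cases hi : n₀ ≤ i
    · rw [if_pos hi, ← tsum_mul_left]
      refine tsum_congr fun j => ?_
      by_cases hij : i < j
      · simp [hf_def, hi, hij]
      · simp [hf_def, hij]
    · rw [if_neg hi]
      have hz : ∀ j, f i j = 0 := fun j => by
        simp only [hf_def]
        rw [if_neg (by tauto)]
      rw [tsum_congr hz, tsum_zero]
  have hinner : ∀ j, ∑' i, f i j = T j := by
    intro j
    have hz : ∀ i, i ∉ Finset.Ico n₀ j → f i j = 0 := by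
      intro i hi
      simp only [Finset.mem_Ico, not_and_or, not_le, not_lt] at hi
      simp only [hf_def]
      rw [if_neg]
      rintro ⟨h1, h2⟩
      rcases hi with h | h <;> omega
    rw [tsum_eq_sum hz]
    refine Finset.sum_congr rfl fun i hi => ?_
    obtain ⟨h1, h2⟩ := Finset.mem_Ico.mp hi
    simp only [hf_def]
    rw [if_pos ⟨h1, h2⟩]
  have h1 : (∑' i, if n₀ ≤ i then
      φ i * ∑' j, (if i < j then β j * k i j * u j else 0) else 0) = ∑' j, T j :=
    calc (∑' i, if n₀ ≤ i then
        φ i * ∑' j, (if i < j then β j * k i j * u j else 0) else 0)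
        = ∑' i, ∑' j, f i j := tsum_congr hstep1
      _ = ∑' j, ∑' i, f i j := (Summable.tsum_comm hFs).symm
      _ = ∑' j, T j := tsum_congr hinner
  have hS1 : (∑' j, if n₀ + 1 ≤ j then
      ∑ i ∈ Finset.Ico n₀ j, (i : ℝ) * k i j * β j * u j * (φ i / i - φ j / j)
      else 0) = ∑' j, T j - ∑' j, Q j := by
    rw [tsum_congr hS1TQ]
    exact Summable.tsum_sub hTs hQs
  have hB2 : (∑' j, B j) = 2 * ∑' j, Q j + 2 * ∑' j, S2 j :=
    calc (∑' j, B j) = ∑' j, (2 * Q j + 2 * S2 j) := tsum_congr fun j => (hQS2B j).symm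
      _ = 2 * ∑' j, Q j + 2 * ∑' j, S2 j := by
          rw [Summable.tsum_add (hQs.mul_left 2) (hS2s.mul_left 2), tsum_mul_left, tsum_mul_left]
  rw [h1, hS1]
  linarith [hB2]
end

section
/- Let (Pⁿ)_{n∈ℕ} and P be probability measures on ℝ with support contained in a fixed interval [a,b]. For each n let Fⁿ(x) = Pⁿ((−∞, x]) and Gⁿ(x) = ∫_{−∞}^x Fⁿ(s) ds, and similarly F, G for P. Then the following are equivalent: (1) Pⁿ → P weakly, i.e. ∫ f dPⁿ → ∫ f dP for every bounded continuous f on ℝ; (2) Fⁿ(x) → F(x) for every x at which F is continuous; (3) Gⁿ → G uniformly on compact subsets of ℝ. -/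
open Filter MeasureTheory Topology Set

section Aux
variable {a b : ℝ} {μ : Measure ℝ}

lemma cdf_mono [IsFiniteMeasure μ] : Monotone (fun x => (μ (Iic x)).toReal) := fun x y hxy =>
  ENNReal.toReal_mono (measure_ne_top μ _) (measure_mono (Iic_subset_Iic.2 hxy))

lemma cdf_nonneg (x : ℝ) : 0 ≤ (μ (Iic x)).toReal := ENNReal.toReal_nonneg

lemma cdf_le_one [IsProbabilityMeasure μ] (x : ℝ) : (μ (Iic x)).toReal ≤ 1 := by
  have := prob_le_one (μ := μ) (s := Iic x)
  simpa using ENNReal.toReal_mono (by simp) this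

lemma cdf_eq_zero (hsupp : μ (Icc a b)ᶜ = 0) {x : ℝ} (hx : x < a) :
    (μ (Iic x)).toReal = 0 := by
  have : μ (Iic x) = 0 := measure_mono_null (fun y hy => by
    simp only [mem_compl_iff, mem_Icc, not_and_or, not_le]
    exact Or.inl (lt_of_le_of_lt hy hx)) hsupp
  simp [this]

lemma cdf_eq_one [IsProbabilityMeasure μ] (hsupp : μ (Icc a b)ᶜ = 0) {x : ℝ} (hx : b ≤ x) :
    (μ (Iic x)).toReal = 1 := by
  have h1 : μ (Icc a b) = 1 := (prob_compl_eq_zero_iff measurableSet_Icc).1 hsupp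
  have h2 : μ (Iic x) = 1 := le_antisymm (prob_le_one) (by
    rw [← h1]; exact measure_mono (fun y hy => le_trans hy.2 hx))
  simp [h2]

lemma cdf_Ioc [IsFiniteMeasure μ] {s t : ℝ} (hst : s ≤ t) :
    (μ (Ioc s t)).toReal = (μ (Iic t)).toReal - (μ (Iic s)).toReal := by
  rw [show Ioc s t = Iic t \ Iic s by ext y; simp [and_comm], measure_diff (Iic_subset_Iic.2 hst) measurableSet_Iic.nullMeasurableSet
    (measure_ne_top μ _), ENNReal.toReal_sub_of_le (measure_mono (Iic_subset_Iic.2 hst))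
    (measure_ne_top μ _)]

lemma cdf_integrableOn [IsProbabilityMeasure μ] (hsupp : μ (Icc a b)ᶜ = 0) (x : ℝ) :
    IntegrableOn (fun s => (μ (Iic s)).toReal) (Iic x) := by
  have hzero : ∀ y ∈ Iio a, (μ (Iic y)).toReal = (0 : ℝ) :=
    fun y hy => cdf_eq_zero hsupp hy
  rcases lt_or_ge x a with hxa | hax
  · exact (integrableOn_congr_fun (g := fun _ => (0:ℝ))
      (fun y hy => cdf_eq_zero hsupp (lt_of_le_of_lt hy hxa)) measurableSet_Iic).2
      integrableOn_zero
  · have : Iic x = Iio a ∪ Icc a x := by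
      ext y; simp only [mem_Iic, mem_union, mem_Iio, mem_Icc]
      constructor
      · intro h; rcases lt_or_ge y a with h' | h'; exacts [Or.inl h', Or.inr ⟨h', h⟩]
      · rintro (h | ⟨_, h⟩); exacts [le_trans h.le (le_trans hax le_rfl) |>.trans le_rfl, h]
    rw [this]
    refine IntegrableOn.union ?_ ?_
    · exact (integrableOn_congr_fun (g := fun _ => (0:ℝ)) hzero measurableSet_Iio).2
        integrableOn_zero
    · exact MonotoneOn.integrableOn_isCompact isCompact_Icc (cdf_mono.monotoneOn _)

end Aux
open Filter MeasureTheory Topology Set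

section Aux2
variable {μ : Measure ℝ}

-- difference of integrated cdf
lemma G_diff {f : ℝ → ℝ} {x y : ℝ} (hyx : y ≤ x)
    (hint : ∀ z : ℝ, IntegrableOn f (Iic z)) :
    (∫ s in Iic x, f s) - (∫ s in Iic y, f s) = ∫ s in Ioc y x, f s := by
  rw [← Iic_union_Ioc_eq_Iic hyx, setIntegral_union (Iic_disjoint_Ioc le_rfl)
    measurableSet_Ioc (hint y) (((hint x).mono_set (by rw [← Iic_union_Ioc_eq_Iic hyx]; exact subset_union_right)))]
  ring

-- Lipschitz for integrated function with values in [0,1]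
lemma G_lipschitz {f : ℝ → ℝ} (h0 : ∀ s, 0 ≤ f s) (h1 : ∀ s, f s ≤ 1)
    (hint : ∀ z : ℝ, IntegrableOn f (Iic z)) (hmeas : Measurable f) :
    LipschitzWith 1 (fun x => ∫ s in Iic x, f s) := by
  refine LipschitzWith.of_dist_le_mul fun x y => ?_
  wlog hyx : y ≤ x generalizing x y
  · rw [dist_comm, dist_comm x y]; exact this y x (le_of_not_ge hyx)
  have hb : ‖∫ s in Ioc y x, f s‖ ≤ 1 * (volume (Ioc y x)).toReal := by
    refine norm_setIntegral_le_of_norm_le_const (by simp [lt_top_iff_ne_top]) ?_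
    intro z _; rw [Real.norm_eq_abs, abs_le]; exact ⟨by linarith [h0 z], h1 z⟩
  rw [Real.volume_Ioc, ENNReal.toReal_ofReal (by linarith)] at hb
  rw [show ((1:NNReal):ℝ) = 1 by norm_num, one_mul]
  calc |(∫ s in Iic x, f s) - ∫ s in Iic y, f s| = ‖∫ s in Ioc y x, f s‖ := by
        rw [← G_diff hyx hint, Real.norm_eq_abs]
  _ ≤ 1 * (x - y) := hb
  _ = x - y := one_mul _
  _ ≤ |x - y| := le_abs_self _

-- pointwise + equi-Lipschitz ⇒ uniform on compacts
lemma tendstoUniformlyOn_of_lipschitz {Gn : ℕ → ℝ → ℝ} {G : ℝ → ℝ}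
    (hL : ∀ n, LipschitzWith 1 (Gn n))
    (hpt : ∀ x, Tendsto (fun n => Gn n x) atTop (𝓝 (G x)))
    {K : Set ℝ} (hK : IsCompact K) : TendstoUniformlyOn Gn G atTop K := by
  have heq : ∀ S ∈ ({K} : Set (Set ℝ)), EquicontinuousOn Gn S := by
    rintro S rfl
    refine (Metric.equicontinuous_of_continuity_modulus (fun r => r) (by
      exact tendsto_id) Gn fun x y i => ?_).equicontinuousOn _
    simpa using (hL i).dist_le_mul x y
  have h := (EquicontinuousOn.tendsto_uniformOnFun_iff_pi'
    (𝔖 := {K}) (by rintro S rfl; exact hK) heq atTop G).2 ?_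
  · have := (UniformOnFun.tendsto_iff_tendstoUniformlyOn).1 h
    exact this K rfl
  · rw [tendsto_pi_nhds]
    intro x
    exact hpt x
end Aux2
open Filter MeasureTheory Topology Set

lemma bump_exists {u v : ℝ} (huv : u < v) :
    ∃ φ : ℝ → ℝ, Continuous φ ∧ (∀ y, 0 ≤ φ y ∧ φ y ≤ 1) ∧ (∀ y, y ≤ u → φ y = 1) ∧
      (∀ y, v ≤ y → φ y = 0) := by
  refine ⟨fun y => max 0 (min 1 ((v - y)/(v-u))), by fun_prop, fun y => ⟨le_max_left _ _, ?_⟩,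
    fun y hy => ?_, fun y hy => ?_⟩
  · exact max_le (by norm_num) (min_le_left _ _)
  · have h1 : (1:ℝ) ≤ (v - y)/(v-u) := (one_le_div (by linarith)).2 (by linarith)
    show (0:ℝ) ⊔ 1 ⊓ ((v - y)/(v-u)) = 1
    rw [min_eq_left h1, max_eq_right zero_le_one]
  · have hd : (v - y)/(v-u) ≤ 0 := div_nonpos_of_nonpos_of_nonneg (by linarith) (by linarith)
    show (0:ℝ) ⊔ 1 ⊓ ((v - y)/(v-u)) = 0
    exact max_eq_left (min_le_of_right_le hd)

lemma integral_bump_bounds {μ : Measure ℝ} [IsProbabilityMeasure μ] {u v : ℝ}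
    {φ : ℝ → ℝ} (hφc : Continuous φ) (hφ01 : ∀ y, 0 ≤ φ y ∧ φ y ≤ 1)
    (hφ1 : ∀ y, y ≤ u → φ y = 1) (hφ0 : ∀ y, v ≤ y → φ y = 0) :
    (μ (Iic u)).toReal ≤ ∫ y, φ y ∂μ ∧ ∫ y, φ y ∂μ ≤ (μ (Iic v)).toReal := by
  have hφint : Integrable φ μ := by
    refine Integrable.mono' (integrable_const 1) hφc.aestronglyMeasurable
      (ae_of_all _ fun y => ?_)
    rw [Real.norm_eq_abs, abs_le]; exact ⟨by linarith [(hφ01 y).1], (hφ01 y).2⟩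
  have hiu : Integrable ((Iic u).indicator (fun _ => (1:ℝ))) μ :=
    (integrable_const 1).indicator measurableSet_Iic
  have hiv : Integrable ((Iic v).indicator (fun _ => (1:ℝ))) μ :=
    (integrable_const 1).indicator measurableSet_Iic
  have m1 : ∫ y, (Iic u).indicator (fun _ => (1:ℝ)) y ∂μ ≤ ∫ y, φ y ∂μ := by
    refine integral_mono hiu hφint fun y => ?_
    by_cases hy : y ∈ Iic u
    · rw [Set.indicator_of_mem hy]; exact le_of_eq (hφ1 y hy).symm
    · rw [Set.indicator_of_notMem hy]; exact (hφ01 y).1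
  have m2 : ∫ y, φ y ∂μ ≤ ∫ y, (Iic v).indicator (fun _ => (1:ℝ)) y ∂μ := by
    refine integral_mono hφint hiv fun y => ?_
    by_cases hy : y ∈ Iic v
    · rw [Set.indicator_of_mem hy]; exact (hφ01 y).2
    · rw [Set.indicator_of_notMem hy, hφ0 y (le_of_lt (not_le.1 hy))]
  have e1 : ∫ y, (Iic u).indicator (fun _ => (1:ℝ)) y ∂μ = (μ (Iic u)).toReal :=
    integral_indicator_one measurableSet_Iic
  have e2 : ∫ y, (Iic v).indicator (fun _ => (1:ℝ)) y ∂μ = (μ (Iic v)).toReal :=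
    integral_indicator_one measurableSet_Iic
  exact ⟨e1 ▸ m1, e2 ▸ m2⟩

lemma weak_to_cdf (P : ℕ → Measure ℝ) (Plim : Measure ℝ)
    (hP : ∀ n, IsProbabilityMeasure (P n)) (hPlim : IsProbabilityMeasure Plim)
    (h1 : ∀ f : ℝ → ℝ, Continuous f → (∃ C, ∀ x, |f x| ≤ C) →
        Tendsto (fun n => ∫ x, f x ∂(P n)) atTop (𝓝 (∫ x, f x ∂Plim)))
    (x : ℝ) (hx : ContinuousAt (fun y => (Plim (Iic y)).toReal) x) :
    Tendsto (fun n => ((P n) (Iic x)).toReal) atTop (𝓝 ((Plim (Iic x)).toReal)) := by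
  rw [tendsto_order]
  constructor
  · intro c hc
    obtain ⟨δ, hδ, hδ'⟩ := Metric.continuousAt_iff.1 hx ((Plim (Iic x)).toReal - c) (by linarith)
    obtain ⟨φ, hφc, hφ01, hφ1, hφ0⟩ := bump_exists (show x - δ/2 < x by linarith)
    have hdist : dist (x - δ/2) x < δ := by
      rw [Real.dist_eq, abs_of_nonpos (by linarith)]; linarith
    have hFu : c < (Plim (Iic (x - δ/2))).toReal := by
      have := hδ' hdist
      rw [Real.dist_eq, abs_lt] at this
      linarith [this.1]
    have hlim : c < ∫ y, φ y ∂Plim :=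
      lt_of_lt_of_le hFu (integral_bump_bounds hφc hφ01 hφ1 hφ0).1
    have := (h1 φ hφc ⟨1, fun y => abs_le.2 ⟨by linarith [(hφ01 y).1], (hφ01 y).2⟩⟩).eventually
      (eventually_gt_nhds hlim)
    filter_upwards [this] with n hn
    exact lt_of_lt_of_le hn (haveI := hP n; (integral_bump_bounds hφc hφ01 hφ1 hφ0).2)
  · intro c hc
    obtain ⟨δ, hδ, hδ'⟩ := Metric.continuousAt_iff.1 hx (c - (Plim (Iic x)).toReal) (by linarith)
    obtain ⟨φ, hφc, hφ01, hφ1, hφ0⟩ := bump_exists (show x < x + δ/2 by linarith)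
    have hdist : dist (x + δ/2) x < δ := by
      rw [Real.dist_eq, abs_of_nonneg (by linarith)]; linarith
    have hFv : (Plim (Iic (x + δ/2))).toReal < c := by
      have := hδ' hdist
      rw [Real.dist_eq, abs_lt] at this
      linarith [this.2]
    have hlim : ∫ y, φ y ∂Plim < c :=
      lt_of_le_of_lt (integral_bump_bounds hφc hφ01 hφ1 hφ0).2 hFv
    have := (h1 φ hφc ⟨1, fun y => abs_le.2 ⟨by linarith [(hφ01 y).1], (hφ01 y).2⟩⟩).eventually
      (eventually_lt_nhds hlim)
    filter_upwards [this] with n hn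
    exact lt_of_le_of_lt (haveI := hP n; (integral_bump_bounds hφc hφ01 hφ1 hφ0).1) hn

lemma integral_Ioc_partition (μ : Measure ℝ) {f : ℝ → ℝ} (hf : ∀ s : Set ℝ, IntegrableOn f s μ)
    (t : ℕ → ℝ) (hm : Monotone t) (K : ℕ) :
    ∫ y in Ioc (t 0) (t K), f y ∂μ
      = ∑ i ∈ Finset.range K, ∫ y in Ioc (t i) (t (i+1)), f y ∂μ := by
  induction K with
  | zero => simp
  | succ K ih =>
    rw [Finset.sum_range_succ, ← ih, ← setIntegral_union
      (Set.Ioc_disjoint_Ioc.2 (inf_le_left.trans le_sup_right)) measurableSet_Ioc (hf _) (hf _),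
      Ioc_union_Ioc_eq_Ioc (hm (Nat.zero_le K)) (hm (Nat.le_succ K))]

lemma cdf_to_G (a b : ℝ) (P : ℕ → Measure ℝ) (Plim : Measure ℝ)
    (hP : ∀ n, IsProbabilityMeasure (P n)) (hPlim : IsProbabilityMeasure Plim)
    (hPsupp : ∀ n, P n (Icc a b)ᶜ = 0) (hPlimsupp : Plim (Icc a b)ᶜ = 0)
    (h2 : ∀ x : ℝ, ContinuousAt (fun y => (Plim (Iic y)).toReal) x →
      Tendsto (fun n => ((P n) (Iic x)).toReal) atTop (𝓝 ((Plim (Iic x)).toReal)))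
    {K : Set ℝ} (hK : IsCompact K) :
    TendstoUniformlyOn (fun n x => ∫ s in Iic x, ((P n) (Iic s)).toReal)
      (fun x => ∫ s in Iic x, (Plim (Iic s)).toReal) atTop K := by
  haveI := hPlim
  refine tendstoUniformlyOn_of_lipschitz (fun n => ?_) (fun x => ?_) hK
  · haveI := hP n
    exact G_lipschitz (fun s => cdf_nonneg _) (fun s => cdf_le_one _)
      (fun z => cdf_integrableOn (hPsupp n) z) (cdf_mono (μ := P n)).measurable
  · have hD : volume {s : ℝ | ¬ContinuousAt (fun y => (Plim (Iic y)).toReal) s} = 0 :=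
      ((cdf_mono (μ := Plim)).countable_not_continuousAt).measure_zero _
    have hae : ∀ᵐ s : ℝ, Tendsto (fun n => ((P n) (Iic s)).toReal) atTop
        (𝓝 ((Plim (Iic s)).toReal)) := by
      filter_upwards [measure_eq_zero_iff_ae_notMem.1 hD] with s hs
      exact h2 s (not_not.1 hs)
    refine tendsto_integral_of_dominated_convergence
      (bound := (Icc a x).indicator (fun _ => (1:ℝ)))
      (fun n => (cdf_mono (μ := P n)).measurable.aestronglyMeasurable) ?_ ?_
      (ae_restrict_of_ae hae)
    · refine (integrable_indicator_iff measurableSet_Icc).2 ?_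
      refine integrableOn_const (ne_of_lt ?_)
      refine lt_of_le_of_lt (Measure.restrict_apply_le _ _) ?_
      rw [Real.volume_Icc]; exact ENNReal.ofReal_lt_top
    · intro n
      refine (ae_restrict_iff' measurableSet_Iic).2 (ae_of_all _ fun s hs => ?_)
      haveI := hP n
      rcases lt_or_ge s a with hsa | has
      · rw [cdf_eq_zero (hPsupp n) hsa, Set.indicator_of_notMem (fun hmem => (not_le.2 hsa) hmem.1)]
        simp
      · rw [Set.indicator_of_mem (show s ∈ Icc a x from ⟨has, hs⟩), Real.norm_eq_abs,
          abs_of_nonneg (cdf_nonneg _)]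
        exact cdf_le_one _

lemma G_to_cdf (a b : ℝ) (P : ℕ → Measure ℝ) (Plim : Measure ℝ)
    (hP : ∀ n, IsProbabilityMeasure (P n)) (hPlim : IsProbabilityMeasure Plim)
    (hPsupp : ∀ n, P n (Icc a b)ᶜ = 0) (hPlimsupp : Plim (Icc a b)ᶜ = 0)
    (h3 : ∀ R : ℝ, 0 < R →
      TendstoUniformlyOn (fun n x => ∫ s in Iic x, ((P n) (Iic s)).toReal)
        (fun x => ∫ s in Iic x, (Plim (Iic s)).toReal) atTop (Icc (-R) R))
    (x : ℝ) (hx : ContinuousAt (fun y => (Plim (Iic y)).toReal) x) :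
    Tendsto (fun n => ((P n) (Iic x)).toReal) atTop (𝓝 ((Plim (Iic x)).toReal)) := by
  haveI := hPlim
  have hGpt : ∀ z : ℝ, Tendsto (fun n => ∫ s in Iic z, ((P n) (Iic s)).toReal) atTop
      (𝓝 (∫ s in Iic z, (Plim (Iic s)).toReal)) := by
    intro z
    refine (h3 (|z|+1) (by positivity)).tendsto_at ?_
    constructor
    · linarith [neg_abs_le z]
    · linarith [le_abs_self z]
  -- integral bounds over Ioc intervals
  have key_le : ∀ (μ : Measure ℝ), IsProbabilityMeasure μ → μ (Icc a b)ᶜ = 0 →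
      ∀ u v : ℝ, u ≤ v →
      (v - u) * (μ (Iic u)).toReal ≤ ∫ s in Ioc u v, (μ (Iic s)).toReal ∧
      ∫ s in Ioc u v, (μ (Iic s)).toReal ≤ (v - u) * (μ (Iic v)).toReal := by
    intro μ hμ hμs u v huv
    haveI := hμ
    have hint : IntegrableOn (fun s => (μ (Iic s)).toReal) (Ioc u v) := by
      refine (cdf_integrableOn hμs v).mono_set fun y hy => hy.2
    constructor
    · calc (v - u) * (μ (Iic u)).toReal
          = ∫ _ in Ioc u v, (μ (Iic u)).toReal := by
            rw [setIntegral_const, Measure.real, Real.volume_Ioc, smul_eq_mul,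
              ENNReal.toReal_ofReal (by linarith)]
      _ ≤ ∫ s in Ioc u v, (μ (Iic s)).toReal := by
            refine setIntegral_mono_on (integrableOn_const (ne_of_lt ?_)) hint
              measurableSet_Ioc fun s hs => cdf_mono hs.1.le
            rw [Real.volume_Ioc]; exact ENNReal.ofReal_lt_top
    · calc ∫ s in Ioc u v, (μ (Iic s)).toReal
          ≤ ∫ _ in Ioc u v, (μ (Iic v)).toReal := by
            refine setIntegral_mono_on hint (integrableOn_const (ne_of_lt ?_))
              measurableSet_Ioc fun s hs => cdf_mono hs.2
            rw [Real.volume_Ioc]; exact ENNReal.ofReal_lt_top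
      _ = (v - u) * (μ (Iic v)).toReal := by
            rw [setIntegral_const, Measure.real, Real.volume_Ioc, smul_eq_mul,
              ENNReal.toReal_ofReal (by linarith)]
  have hGdiff : ∀ (μ : Measure ℝ), IsProbabilityMeasure μ → μ (Icc a b)ᶜ = 0 → ∀ u v : ℝ, u ≤ v →
      (∫ s in Iic v, (μ (Iic s)).toReal) - (∫ s in Iic u, (μ (Iic s)).toReal)
        = ∫ s in Ioc u v, (μ (Iic s)).toReal := by
    intro μ hμ hμs u v huv
    haveI := hμ
    exact G_diff huv (fun z => cdf_integrableOn hμs z)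
  rw [tendsto_order]
  constructor
  · intro c hc
    obtain ⟨δ, hδ, hδ'⟩ := Metric.continuousAt_iff.1 hx ((Plim (Iic x)).toReal - c) (by linarith)
    set h := δ/2 with hh
    have hh0 : 0 < h := by positivity
    have hFxm : c < (Plim (Iic (x - h))).toReal := by
      have := hδ' (show dist (x - h) x < δ by
        rw [Real.dist_eq, abs_of_nonpos (by linarith)]; linarith)
      rw [Real.dist_eq, abs_lt] at this
      linarith [this.1]
    have hlimlb : h * c < (∫ s in Iic x, (Plim (Iic s)).toReal)
        - (∫ s in Iic (x-h), (Plim (Iic s)).toReal) := by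
      rw [hGdiff Plim hPlim hPlimsupp (x-h) x (by linarith)]
      have := (key_le Plim hPlim hPlimsupp (x-h) x (by linarith)).1
      have h2' : x - (x - h) = h := by ring
      rw [h2'] at this
      nlinarith
    have hev := ((hGpt x).sub (hGpt (x-h))).eventually (eventually_gt_nhds hlimlb)
    filter_upwards [hev] with n hn
    have hub := (key_le (P n) (hP n) (hPsupp n) (x-h) x (by linarith)).2
    rw [← hGdiff (P n) (hP n) (hPsupp n) (x-h) x (by linarith)] at hub
    have h2' : x - (x - h) = h := by ring
    rw [h2'] at hub
    nlinarith
  · intro c hc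
    obtain ⟨δ, hδ, hδ'⟩ := Metric.continuousAt_iff.1 hx (c - (Plim (Iic x)).toReal) (by linarith)
    set h := δ/2 with hh
    have hh0 : 0 < h := by positivity
    have hFxp : (Plim (Iic (x + h))).toReal < c := by
      have := hδ' (show dist (x + h) x < δ by
        rw [Real.dist_eq, abs_of_nonneg (by linarith)]; linarith)
      rw [Real.dist_eq, abs_lt] at this
      linarith [this.2]
    have hlimub : (∫ s in Iic (x+h), (Plim (Iic s)).toReal)
        - (∫ s in Iic x, (Plim (Iic s)).toReal) < h * c := by
      rw [hGdiff Plim hPlim hPlimsupp x (x+h) (by linarith)]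
      have := (key_le Plim hPlim hPlimsupp x (x+h) (by linarith)).2
      have h2' : x + h - x = h := by ring
      rw [h2'] at this
      nlinarith
    have hev := ((hGpt (x+h)).sub (hGpt x)).eventually (eventually_lt_nhds hlimub)
    filter_upwards [hev] with n hn
    have hlb := (key_le (P n) (hP n) (hPsupp n) x (x+h) (by linarith)).1
    rw [← hGdiff (P n) (hP n) (hPsupp n) x (x+h) (by linarith)] at hlb
    have h2' : x + h - x = h := by ring
    rw [h2'] at hlb
    nlinarith

lemma cdf_to_weak (a b : ℝ) (hab : a < b) (P : ℕ → Measure ℝ) (Plim : Measure ℝ)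
    (hP : ∀ n, IsProbabilityMeasure (P n)) (hPlim : IsProbabilityMeasure Plim)
    (hPsupp : ∀ n, P n (Icc a b)ᶜ = 0) (hPlimsupp : Plim (Icc a b)ᶜ = 0)
    (h2 : ∀ x : ℝ, ContinuousAt (fun y => (Plim (Iic y)).toReal) x →
      Tendsto (fun n => ((P n) (Iic x)).toReal) atTop (𝓝 ((Plim (Iic x)).toReal)))
    (f : ℝ → ℝ) (hfc : Continuous f) (hfb : ∃ C, ∀ x, |f x| ≤ C) :
    Tendsto (fun n => ∫ x, f x ∂(P n)) atTop (𝓝 (∫ x, f x ∂Plim)) := by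
  haveI := hPlim
  obtain ⟨C, hC⟩ := hfb
  rw [Metric.tendsto_atTop]
  intro ε hε
  -- uniform continuity of f on the compact [a-1, b+1]
  have huc := (isCompact_Icc (a := a-1) (b := b+1)).uniformContinuousOn_of_continuous
    hfc.continuousOn
  rw [Metric.uniformContinuousOn_iff] at huc
  obtain ⟨δ, hδ, hδ'⟩ := huc (ε/6) (by linarith)
  set η := min δ 1 / 2 with hηdef
  have hη0 : 0 < η := by
    have : (0:ℝ) < min δ 1 := lt_min hδ one_pos
    positivity
  have hη1 : η ≤ 1/2 := by
    have : min δ 1 ≤ 1 := min_le_right _ _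
    rw [hηdef]; linarith
  have hηδ : 2*η ≤ δ := by
    have : min δ 1 ≤ δ := min_le_left _ _
    rw [hηdef]; linarith
  set K := Nat.ceil ((b + 1 - a)/η) with hKdef
  have hKge : (b + 1 - a)/η ≤ (K:ℝ) := Nat.le_ceil _
  have hKlt : (K:ℝ) < (b + 1 - a)/η + 1 :=
    Nat.ceil_lt_add_one (by
      have h : (0:ℝ) < b + 1 - a := by linarith
      positivity)
  have hKb : b ≤ a - 1 + K * η := by
    have : b + 1 - a ≤ K * η := by
      rw [div_le_iff₀ hη0] at hKge; linarith
    linarith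
  -- choose grid points avoiding discontinuities of F
  have hD : volume {s : ℝ | ¬ContinuousAt (fun y => (Plim (Iic y)).toReal) s} = 0 :=
    ((cdf_mono (μ := Plim)).countable_not_continuousAt).measure_zero _
  have hpick : ∀ i : ℕ, (Ioo (a-1+i*η) (a-1+(i+1)*η) \
      {s : ℝ | ¬ContinuousAt (fun y => (Plim (Iic y)).toReal) s}).Nonempty := by
    intro i
    apply nonempty_of_measure_ne_zero (μ := volume)
    rw [measure_diff_null hD, Real.volume_Ioo]
    have : a-1+(i+1)*η - (a-1+i*η) = η := by ring
    rw [this]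
    exact (ENNReal.ofReal_pos.2 hη0).ne'
  choose t ht using hpick
  have htlo : ∀ i, a-1+i*η < t i := fun i => (ht i).1.1
  have hthi : ∀ i, t i < a-1+(i+1)*η := fun i => (ht i).1.2
  have htc : ∀ i, ContinuousAt (fun y => (Plim (Iic y)).toReal) (t i) := fun i =>
    not_not.1 (ht i).2
  have htmono : StrictMono t := strictMono_nat_of_lt_succ fun i => by
    have h1 := hthi i
    have h2 := htlo (i+1)
    push_cast at h1 h2 ⊢
    linarith
  have ht0a : t 0 < a := by
    have := hthi 0
    push_cast at this
    linarith
  have htKb : b ≤ t K := by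
    have := htlo K
    linarith
  have htmem : ∀ i, i ≤ K → t i ∈ Icc (a-1) (b+1) := by
    intro i hi
    constructor
    · have h0 : (0:ℝ) ≤ (i:ℝ) * η := mul_nonneg (Nat.cast_nonneg i) hη0.le
      linarith [htlo i]
    · have h1 := hthi i
      have h2 : ((i:ℝ)+1)*η ≤ ((K:ℝ)+1)*η := by
        have : (i:ℝ) ≤ K := by exact_mod_cast hi
        nlinarith
      have h3 : (K:ℝ)*η < b + 1 - a + η := by
        rw [div_add_one hη0.ne', lt_div_iff₀ hη0] at hKlt
        nlinarith
      nlinarith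
  -- the key per-measure estimate
  have key : ∀ μ : Measure ℝ, IsProbabilityMeasure μ → μ (Icc a b)ᶜ = 0 →
      |(∫ y, f y ∂μ) - ∑ i ∈ Finset.range K, f (t (i+1)) *
        ((μ (Iic (t (i+1)))).toReal - (μ (Iic (t i))).toReal)| ≤ ε/6 := by
    intro μ hμ hμs
    haveI := hμ
    have hfint : Integrable f μ := by
      refine Integrable.mono' (integrable_const C) hfc.aestronglyMeasurable
        (ae_of_all _ fun y => ?_)
      rw [Real.norm_eq_abs]; exact hC y
    have hae : ∀ᵐ y ∂μ, y ∈ Ioc (t 0) (t K) := by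
      filter_upwards [measure_eq_zero_iff_ae_notMem.1 hμs] with y hy
      rw [Set.notMem_compl_iff] at hy
      exact ⟨lt_of_lt_of_le ht0a hy.1, le_trans hy.2 htKb⟩
    have hsplit : ∫ y, f y ∂μ = ∑ i ∈ Finset.range K, ∫ y in Ioc (t i) (t (i+1)), f y ∂μ := by
      rw [← integral_Ioc_partition μ (fun s => hfint.integrableOn) t htmono.monotone K,
        Measure.restrict_eq_self_of_ae_mem hae]
    have hIoc : ∀ i, (μ (Ioc (t i) (t (i+1)))).toReal
        = (μ (Iic (t (i+1)))).toReal - (μ (Iic (t i))).toReal :=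
      fun i => cdf_Ioc (htmono (Nat.lt_succ_self i)).le
    have hpiece : ∀ i ∈ Finset.range K,
        |(∫ y in Ioc (t i) (t (i+1)), f y ∂μ) - f (t (i+1)) * (μ (Ioc (t i) (t (i+1)))).toReal|
          ≤ ε/6 * (μ (Ioc (t i) (t (i+1)))).toReal := by
      intro i hi
      rw [Finset.mem_range] at hi
      have hmem1 : t (i+1) ∈ Icc (a-1) (b+1) := htmem (i+1) hi
      have hdiff : ∀ y ∈ Ioc (t i) (t (i+1)), ‖f y - f (t (i+1))‖ ≤ ε/6 := by
        intro y hy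
        have hymem : y ∈ Icc (a-1) (b+1) := by
          constructor
          · have := htlo i
            have h0 : (0:ℝ) ≤ (i:ℝ) * η := mul_nonneg (Nat.cast_nonneg i) hη0.le
            linarith [hy.1]
          · exact le_trans hy.2 hmem1.2
        have hdist : dist y (t (i+1)) < δ := by
          rw [Real.dist_eq, abs_of_nonpos (by linarith [hy.2])]
          have hgap : t (i+1) - t i < 2*η := by
            have h1 := hthi (i+1)
            have h2 := htlo i
            push_cast at h1 h2
            linarith
          linarith [hy.1]
        rw [Real.norm_eq_abs]
        exact le_of_lt (hδ' y hymem (t (i+1)) hmem1 hdist)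
      have heq : (∫ y in Ioc (t i) (t (i+1)), f y ∂μ) - f (t (i+1)) * (μ (Ioc (t i) (t (i+1)))).toReal
          = ∫ y in Ioc (t i) (t (i+1)), (f y - f (t (i+1))) ∂μ := by
        rw [integral_sub hfint.integrableOn (integrableOn_const (measure_lt_top _ _).ne),
          setIntegral_const, Measure.real, smul_eq_mul, mul_comm]
      rw [heq, ← Real.norm_eq_abs]
      exact norm_setIntegral_le_of_norm_le_const (measure_lt_top _ _) hdiff
    have hsum : (μ (Iic (t K))).toReal - (μ (Iic (t 0))).toReal = 1 := by
      rw [cdf_eq_one hμs htKb, cdf_eq_zero hμs ht0a]; ring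
    calc |(∫ y, f y ∂μ) - ∑ i ∈ Finset.range K, f (t (i+1)) *
          ((μ (Iic (t (i+1)))).toReal - (μ (Iic (t i))).toReal)|
        = |∑ i ∈ Finset.range K, ((∫ y in Ioc (t i) (t (i+1)), f y ∂μ)
            - f (t (i+1)) * (μ (Ioc (t i) (t (i+1)))).toReal)| := by
          rw [hsplit, ← Finset.sum_sub_distrib]
          congr 1
          refine Finset.sum_congr rfl fun i _ => ?_
          rw [hIoc i]
    _ ≤ ∑ i ∈ Finset.range K, |(∫ y in Ioc (t i) (t (i+1)), f y ∂μ)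
            - f (t (i+1)) * (μ (Ioc (t i) (t (i+1)))).toReal| :=
          Finset.abs_sum_le_sum_abs _ _
    _ ≤ ∑ i ∈ Finset.range K, ε/6 * (μ (Ioc (t i) (t (i+1)))).toReal :=
          Finset.sum_le_sum hpiece
    _ = ε/6 * ((μ (Iic (t K))).toReal - (μ (Iic (t 0))).toReal) := by
          rw [← Finset.mul_sum]
          congr 1
          rw [show (∑ i ∈ Finset.range K, (μ (Ioc (t i) (t (i+1)))).toReal)
            = ∑ i ∈ Finset.range K, ((μ (Iic (t (i+1)))).toReal - (μ (Iic (t i))).toReal) from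
            Finset.sum_congr rfl fun i _ => hIoc i, Finset.sum_range_sub
            (fun i => (μ (Iic (t i))).toReal)]
    _ = ε/6 := by rw [hsum, mul_one]
  -- convergence of the Riemann sums
  have hsums : Tendsto (fun n => ∑ i ∈ Finset.range K, f (t (i+1)) *
      (((P n) (Iic (t (i+1)))).toReal - ((P n) (Iic (t i))).toReal)) atTop
      (𝓝 (∑ i ∈ Finset.range K, f (t (i+1)) *
      ((Plim (Iic (t (i+1)))).toReal - (Plim (Iic (t i))).toReal))) := by
    refine tendsto_finset_sum _ fun i _ => ?_
    exact ((h2 _ (htc (i+1))).sub (h2 _ (htc i))).const_mul _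
  have hev := hsums.eventually (eventually_mem_set.2 (Metric.ball_mem_nhds _
    (show (0:ℝ) < ε/2 by linarith)))
  rw [eventually_atTop] at hev
  obtain ⟨N, hN⟩ := hev
  refine ⟨N, fun n hn => ?_⟩
  have h1 := key (P n) (hP n) (hPsupp n)
  have h2' := key Plim hPlim hPlimsupp
  have h3 := hN n hn
  rw [Metric.mem_ball, Real.dist_eq] at h3
  rw [Real.dist_eq]
  set Sn := ∑ i ∈ Finset.range K, f (t (i+1)) *
      (((P n) (Iic (t (i+1)))).toReal - ((P n) (Iic (t i))).toReal)
  set S := ∑ i ∈ Finset.range K, f (t (i+1)) *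
      ((Plim (Iic (t (i+1)))).toReal - (Plim (Iic (t i))).toReal)
  have htri : |(∫ x, f x ∂(P n)) - ∫ x, f x ∂Plim|
      ≤ |(∫ x, f x ∂(P n)) - Sn| + |Sn - S| + |S - ∫ x, f x ∂Plim| := by
    calc |(∫ x, f x ∂(P n)) - ∫ x, f x ∂Plim|
        ≤ |(∫ x, f x ∂(P n)) - Sn| + |Sn - ∫ x, f x ∂Plim| := abs_sub_le _ _ _
    _ ≤ |(∫ x, f x ∂(P n)) - Sn| + (|Sn - S| + |S - ∫ x, f x ∂Plim|) := by
        gcongr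
        exact abs_sub_le _ _ _
    _ = _ := by ring
  have habs : |S - ∫ x, f x ∂Plim| = |(∫ x, f x ∂Plim) - S| := abs_sub_comm _ _
  rw [habs] at htri
  linarith

/-- Lemma A.3: for probability measures `Pⁿ, P` on `ℝ` supported in a
fixed interval `[a,b]`, with `Fⁿ, F` the repartition (cumulative distribution) functions
and `Gⁿ(x) = ∫_{-∞}^x Fⁿ`, `G(x) = ∫_{-∞}^x F`, the following are equivalent:
(1) `Pⁿ → P` weakly; (2) `Fⁿ(x) → F(x)` at every continuity point `x` of `F`;
(3) `Gⁿ → G` uniformly on compact sets. -/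
theorem cdf_characterizations_of_weak_convergence (a b : ℝ) (hab : a < b)
    (P : ℕ → Measure ℝ) (Plim : Measure ℝ)
    (hP : ∀ n, IsProbabilityMeasure (P n)) (hPlim : IsProbabilityMeasure Plim)
    (hPsupp : ∀ n, P n (Set.Icc a b)ᶜ = 0) (hPlimsupp : Plim (Set.Icc a b)ᶜ = 0) :
    ((∀ f : ℝ → ℝ, Continuous f → (∃ C, ∀ x, |f x| ≤ C) →
        Tendsto (fun n => ∫ x, f x ∂(P n)) atTop (𝓝 (∫ x, f x ∂Plim)))
      ↔ (∀ x : ℝ, ContinuousAt (fun y => (Plim (Set.Iic y)).toReal) x →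
          Tendsto (fun n => ((P n) (Set.Iic x)).toReal) atTop
            (𝓝 ((Plim (Set.Iic x)).toReal)))) ∧
    ((∀ x : ℝ, ContinuousAt (fun y => (Plim (Set.Iic y)).toReal) x →
        Tendsto (fun n => ((P n) (Set.Iic x)).toReal) atTop
          (𝓝 ((Plim (Set.Iic x)).toReal)))
      ↔ (∀ R : ℝ, 0 < R →
          TendstoUniformlyOn
            (fun n x => ∫ s in Set.Iic x, ((P n) (Set.Iic s)).toReal)
            (fun x => ∫ s in Set.Iic x, (Plim (Set.Iic s)).toReal)
            atTop (Set.Icc (-R) R))) := by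
  constructor
  · constructor
    · intro h1 x hx
      exact weak_to_cdf P Plim hP hPlim h1 x hx
    · intro h2 f hfc hfb
      exact cdf_to_weak a b hab P Plim hP hPlim hPsupp hPlimsupp h2 f hfc hfb
  · constructor
    · intro h2 R _
      exact cdf_to_G a b P Plim hP hPlim hPsupp hPlimsupp h2 isCompact_Icc
    · intro h3 x hx
      exact G_to_cdf a b P Plim hP hPlim hPsupp hPlimsupp h3 x hx
end

section
/- Let a < b and let G : ℝ → ℝ be a convex function. There exists a probability measure P on ℝ with support contained in [a,b] such that G(x) = ∫_{−∞}^x F(s) ds, where F(x) = P((−∞,x]), if and only if: G is nondecreasing, G ≡ 0 on (−∞, a], and G(x) = G(b) + (x − b) for all x ≥ b. -/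
open MeasureTheory Set Filter Topology

section Aux

variable {a b : ℝ}

/-- Auxiliary: integrability on `Iic x` of a monotone function vanishing below `a`
and bounded. -/
lemma aux_integrableOn_Iic {F : ℝ → ℝ} (a x : ℝ) (hF : Monotone F)
    (h0 : ∀ s, s < a → F s = 0) : IntegrableOn F (Iic x) := by
  have h1 : IntegrableOn F (Iio a) :=
    (integrableOn_zero (μ := volume)).congr_fun (fun s hs => (h0 s hs).symm) measurableSet_Iio
  have h2 : IntegrableOn F (Icc a x) :=
    (hF.monotoneOn _).integrableOn_isCompact isCompact_Icc
  have h3 : IntegrableOn F (Iio a ∪ Icc a x) := h1.union h2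
  refine h3.mono_set fun t ht => ?_
  rcases lt_or_ge t a with h | h
  · exact Or.inl h
  · exact Or.inr ⟨h, ht⟩

/-- Auxiliary: the integral over `Iic x` of a function vanishing strictly below `a`
is zero when `x ≤ a`. -/
lemma aux_integral_Iic_eq_zero {F : ℝ → ℝ} {a x : ℝ} (hx : x ≤ a)
    (h0 : ∀ s, s < a → F s = 0) : ∫ s in Iic x, F s = 0 := by
  have hae : F =ᵐ[volume.restrict (Iic x)] 0 := by
    rw [EventuallyEq, ae_restrict_iff' measurableSet_Iic, ae_iff]
    refine measure_mono_null (fun s hs => ?_) (measure_singleton a)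
    simp only [mem_setOf_eq, Pi.zero_apply, Classical.not_imp, mem_Iic] at hs
    have hsa : s ≤ a := hs.1.trans hx
    rcases lt_or_eq_of_le hsa with h | h
    · exact absurd (h0 s h) hs.2
    · exact h
  rw [integral_congr_ae hae]
  simp

end Aux

/-- Lemma A.5, conditions for `G`: let `a < b` and let `G : ℝ → ℝ` be
convex. There exists a probability measure `P` on `ℝ` supported in `[a,b]` whose
integrated distribution function `x ↦ ∫_{-∞}^x P((-∞,s]) ds` equals `G` if and only if
`G` is nondecreasing, `G ≡ 0` on `(-∞, a]`, and `G(x) = G(b) + (x - b)` for `x ≥ b`. -/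
theorem integrated_cdf_characterization (a b : ℝ) (hab : a < b) (G : ℝ → ℝ)
    (hG : ConvexOn ℝ Set.univ G) :
    (∃ P : Measure ℝ, IsProbabilityMeasure P ∧ P (Set.Icc a b)ᶜ = 0 ∧
        ∀ x : ℝ, G x = ∫ s in Set.Iic x, (P (Set.Iic s)).toReal)
    ↔ (Monotone G ∧ (∀ x ≤ a, G x = 0) ∧ ∀ x : ℝ, b ≤ x → G x = G b + (x - b)) := by
  constructor
  · rintro ⟨P, hP, hsupp, hint⟩
    set F : ℝ → ℝ := fun s => (P (Iic s)).toReal with hFdef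
    have hFmono : Monotone F := fun s t hst =>
      ENNReal.toReal_mono (measure_ne_top P _) (measure_mono (Iic_subset_Iic.2 hst))
    have hF0 : ∀ s, s < a → F s = 0 := by
      intro s hs
      have h : P (Iic s) = 0 := by
        refine measure_mono_null (fun t ht => ?_) hsupp
        simp only [mem_compl_iff, mem_Icc, not_and, not_le]
        intro hat
        exact absurd ((mem_Iic.1 ht).trans_lt hs) (not_lt.2 hat)
      simp [hFdef, h]
    have hF1 : ∀ s, b ≤ s → F s = 1 := by
      intro s hs
      have h : P (Iic s) = 1 := by
        rw [← prob_compl_eq_zero_iff measurableSet_Iic, compl_Iic]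
        refine measure_mono_null (fun t ht => ?_) hsupp
        simp only [mem_compl_iff, mem_Icc, not_and, not_le]
        intro _
        exact hs.trans_lt (mem_Ioi.1 ht)
      simp [hFdef, h]
    have hFnonneg : ∀ s, (0:ℝ) ≤ F s := fun s => ENNReal.toReal_nonneg
    have hFint : ∀ x, IntegrableOn F (Iic x) := fun x => aux_integrableOn_Iic a x hFmono hF0
    have hsplit : ∀ x y : ℝ, x ≤ y →
        ∫ s in Iic y, F s = (∫ s in Iic x, F s) + ∫ s in Ioc x y, F s := by
      intro x y hxy
      rw [← setIntegral_union (Iic_disjoint_Ioc le_rfl) measurableSet_Ioc (hFint x)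
        ((hFint y).mono_set Ioc_subset_Iic_self), Iic_union_Ioc_eq_Iic hxy]
    refine ⟨?_, ?_, ?_⟩
    · intro x y hxy
      rw [hint x, hint y, hsplit x y hxy]
      exact le_add_of_nonneg_right
        (setIntegral_nonneg measurableSet_Ioc fun s _ => hFnonneg s)
    · intro x hx
      rw [hint x]
      exact aux_integral_Iic_eq_zero hx hF0
    · intro x hx
      rw [hint x, hint b, hsplit b x hx]
      congr 1
      have h1 : ∫ s in Ioc b x, F s = ∫ s in Ioc b x, (1:ℝ) :=
        setIntegral_congr_fun measurableSet_Ioc fun s hs => hF1 s hs.1.le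
      rw [h1, setIntegral_const, Real.volume_real_Ioc, smul_eq_mul, mul_one,
        max_eq_left (by linarith)]
  · rintro ⟨hmono, ha0, hblin⟩
    have hGcont : Continuous G := by
      rw [← continuousOn_univ]
      exact hG.continuousOn isOpen_univ
    set rd : ℝ → ℝ := fun x => sInf (slope G x '' Ioi x) with hrddef
    have hne : ∀ x : ℝ, (slope G x '' Ioi x).Nonempty :=
      fun x => ⟨_, mem_image_of_mem _ (mem_Ioi.2 (lt_add_one x))⟩
    have hslopemono : ∀ x : ℝ, MonotoneOn (slope G x) (Ioi x) := fun x =>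
      (hG.slope_mono (mem_univ x)).mono (fun y hy => ⟨mem_univ y, (mem_Ioi.1 hy).ne'⟩)
    have hslope_nonneg : ∀ x y : ℝ, x < y → 0 ≤ slope G x y := by
      intro x y hxy
      rw [slope_def_field]
      exact div_nonneg (sub_nonneg.2 (hmono hxy.le)) (sub_nonneg.2 hxy.le)
    have hbdd : ∀ x : ℝ, BddBelow (slope G x '' Ioi x) := by
      intro x
      refine ⟨slope G x (x - 1), ?_⟩
      rintro v ⟨y, hy, rfl⟩
      exact (hG.slope_mono (mem_univ x)) ⟨mem_univ _, (sub_one_lt x).ne⟩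
        ⟨mem_univ _, (mem_Ioi.1 hy).ne'⟩ (by linarith [mem_Ioi.1 hy])
    have htends : ∀ x : ℝ, Tendsto (slope G x) (𝓝[>] x) (𝓝 (rd x)) :=
      fun x => (hslopemono x).tendsto_nhdsGT (hbdd x)
    have hderiv : ∀ x : ℝ, HasDerivWithinAt G (rd x) (Ioi x) x := by
      intro x
      rw [hasDerivWithinAt_iff_tendsto_slope' notMem_Ioi_self]
      exact htends x
    have hrd_nonneg : ∀ x, (0:ℝ) ≤ rd x := by
      intro x
      refine le_csInf (hne x) ?_
      rintro v ⟨y, hy, rfl⟩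
      exact hslope_nonneg x y (mem_Ioi.1 hy)
    have hrd0 : ∀ x, x < a → rd x = 0 := by
      intro x hx
      refine le_antisymm ?_ (hrd_nonneg x)
      have hmem : slope G x ((x + a)/2) ∈ slope G x '' Ioi x :=
        mem_image_of_mem _ (mem_Ioi.2 (by linarith))
      have hval : slope G x ((x + a)/2) = 0 := by
        rw [slope_def_field, ha0 _ (by linarith : (x + a)/2 ≤ a), ha0 x hx.le]
        simp
      exact hval ▸ csInf_le (hbdd x) hmem
    have hrd1 : ∀ x, b ≤ x → rd x = 1 := by
      intro x hx
      refine le_antisymm ?_ ?_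
      · have hmem : slope G x (x + 1) ∈ slope G x '' Ioi x :=
          mem_image_of_mem _ (mem_Ioi.2 (lt_add_one x))
        have hval : slope G x (x + 1) = 1 := by
          rw [slope_def_field, hblin (x+1) (by linarith), hblin x hx,
            show G b + (x + 1 - b) - (G b + (x - b)) = 1 by ring,
            show x + 1 - x = 1 by ring, div_one]
        exact hval ▸ csInf_le (hbdd x) hmem
      · refine le_csInf (hne x) ?_
        rintro v ⟨y, hy, rfl⟩
        have hxy := mem_Ioi.1 hy
        have hval : slope G x y = 1 := by
          rw [slope_def_field, hblin y (hx.trans hxy.le), hblin x hx,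
            show G b + (y - b) - (G b + (x - b)) = y - x by ring,
            div_self (sub_ne_zero.2 hxy.ne')]
        exact hval.ge
    have hrdmono : Monotone rd := by
      intro x y hxy
      rcases eq_or_lt_of_le hxy with rfl | hxy'
      · rfl
      refine le_csInf (hne y) ?_
      rintro v ⟨z, hz, rfl⟩
      have hyz := mem_Ioi.1 hz
      have h1 : rd x ≤ slope G x y := csInf_le (hbdd x) (mem_image_of_mem _ hxy')
      have h2 : slope G x y ≤ slope G y z := by
        rw [slope_comm G x y]
        exact (hG.slope_mono (mem_univ y)) ⟨mem_univ _, hxy'.ne⟩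
          ⟨mem_univ _, hyz.ne'⟩ (by linarith)
      exact h1.trans h2
    have hrd_le1 : ∀ x, rd x ≤ 1 := by
      intro x
      rcases le_total b x with h | h
      · exact (hrd1 x h).le
      · calc rd x ≤ rd b := hrdmono h
          _ = 1 := hrd1 b le_rfl
    have hFTC : ∀ u v : ℝ, u ≤ v → ∫ t in u..v, rd t = G v - G u := fun u v huv =>
      intervalIntegral.integral_eq_sub_of_hasDeriv_right_of_le huv hGcont.continuousOn
        (fun t _ => hderiv t) hrdmono.intervalIntegrable
    set S := hrdmono.stieltjesFunction with hSdef
    have hSeq : ∀ x, S x = Function.rightLim rd x := fun x => rfl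
    have hS0 : ∀ x, x < a → S x = 0 := by
      intro x hx
      rw [hSeq]
      refine rightLim_eq_of_tendsto (h := nhdsGT_neBot x) ?_
      have hmem : Ioo x a ∈ 𝓝[>] x := Ioo_mem_nhdsGT_of_mem ⟨le_refl x, hx⟩
      refine Tendsto.congr' ?_ tendsto_const_nhds
      filter_upwards [hmem] with t ht
      exact (hrd0 t ht.2).symm
    have hS1 : ∀ x, b ≤ x → S x = 1 := by
      intro x hx
      rw [hSeq]
      refine rightLim_eq_of_tendsto (h := nhdsGT_neBot x) ?_
      refine Tendsto.congr' ?_ tendsto_const_nhds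
      filter_upwards [self_mem_nhdsWithin] with t ht
      exact (hrd1 t (hx.trans (mem_Ioi.1 ht).le)).symm
    have hSbot : Tendsto S atBot (𝓝 0) := by
      refine Tendsto.congr' ?_ tendsto_const_nhds
      filter_upwards [eventually_le_atBot (a - 1)] with t ht
      exact (hS0 t (by linarith)).symm
    have hStop : Tendsto S atTop (𝓝 1) := by
      refine Tendsto.congr' ?_ tendsto_const_nhds
      filter_upwards [eventually_ge_atTop b] with t ht
      exact (hS1 t ht).symm
    have hSnonneg : ∀ x, (0:ℝ) ≤ S x := fun x =>
      (hrd_nonneg x).trans (hrdmono.le_rightLim le_rfl)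
    refine ⟨S.measure, S.isProbabilityMeasure hSbot hStop, ?_, ?_⟩
    · have hPIic : ∀ x, S.measure (Iic x) = ENNReal.ofReal (S x) := by
        intro x
        rw [S.measure_Iic hSbot]
        simp
      have hcompl : (Icc a b)ᶜ = Iio a ∪ Ioi b := by
        ext t
        simp only [mem_compl_iff, mem_Icc, mem_union, mem_Iio, mem_Ioi, not_and_or, not_le]
      rw [hcompl]
      refine measure_union_null ?_ ?_
      · have hun : (⋃ n : ℕ, Iic (a - ((n:ℝ) + 1)⁻¹)) = Iio a := by
          ext t
          simp only [mem_iUnion, mem_Iic, mem_Iio]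
          constructor
          · rintro ⟨n, hn⟩
            have : (0:ℝ) < ((n:ℝ)+1)⁻¹ := by positivity
            linarith
          · intro ht
            obtain ⟨n, hn⟩ := exists_nat_one_div_lt (by linarith : (0:ℝ) < a - t)
            rw [one_div] at hn
            exact ⟨n, by linarith⟩
        rw [← hun]
        refine measure_iUnion_null fun n => ?_
        rw [hPIic, hS0 _ (by simp; positivity)]
        simp
      · have : IsProbabilityMeasure S.measure := S.isProbabilityMeasure hSbot hStop
        rw [← compl_Iic, prob_compl_eq_zero_iff measurableSet_Iic, hPIic, hS1 b le_rfl]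
        simp
    · intro x
      have hPIic : ∀ s, (S.measure (Iic s)).toReal = S s := by
        intro s
        rw [S.measure_Iic hSbot]
        simp [ENNReal.toReal_ofReal (hSnonneg s)]
      simp_rw [hPIic]
      -- S =ᵐ rd
      have haeSrd : (fun t => S t) =ᵐ[volume] rd := by
        rw [EventuallyEq, ae_iff]
        refine measure_mono_null (fun t ht => ?_)
          (hrdmono.countable_not_continuousAt.measure_zero volume)
        simp only [mem_setOf_eq] at ht ⊢
        intro hc
        exact ht (rightLim_eq_of_tendsto
          (h := nhdsGT_neBot t)
          (hc.continuousWithinAt.tendsto))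
      have hSint : ∀ y, IntegrableOn S (Iic y) :=
        fun y => aux_integrableOn_Iic a y S.mono hS0
      rcases le_or_gt x a with hx | hx
      · rw [ha0 x hx]
        exact (aux_integral_Iic_eq_zero hx hS0).symm
      · have hsplit : ∫ s in Iic x, S s = (∫ s in Iic a, S s) + ∫ s in Ioc a x, S s := by
          rw [← setIntegral_union (Iic_disjoint_Ioc le_rfl) measurableSet_Ioc (hSint a)
            ((hSint x).mono_set Ioc_subset_Iic_self), Iic_union_Ioc_eq_Iic hx.le]
        have h1 : ∫ s in Iic a, S s = 0 := aux_integral_Iic_eq_zero le_rfl hS0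
        have h2 : ∫ s in Ioc a x, S s = ∫ s in Ioc a x, rd s :=
          integral_congr_ae (ae_restrict_of_ae haeSrd)
        have h3 : ∫ s in Ioc a x, rd s = G x - G a := by
          rw [← intervalIntegral.integral_of_le hx.le]
          exact hFTC a x hx.le
        rw [hsplit, h1, h2, h3, ha0 a le_rfl, zero_add, sub_zero]
end

section
/- Let a < b and let (Gⁿ)_{n∈ℕ} be convex functions on ℝ, each being the integrated distribution function Gⁿ(x) = ∫_{−∞}^x Fⁿ(s) ds of a probability measure Pⁿ with support contained in [a,b]. If Gⁿ → G uniformly on compact subsets of ℝ, then G is also the integrated distribution function of a probability measure P with support in [a,b], and Pⁿ → P weakly. -/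
open Filter MeasureTheory Topology Set

namespace ICdfAux

variable {a b : ℝ}


noncomputable def cdf (Q : Measure ℝ) (s : ℝ) : ℝ := (Q (Set.Iic s)).toReal

lemma cdf_mono (Q : Measure ℝ) [IsFiniteMeasure Q] : Monotone (cdf Q) := by
  intro s t hst
  exact ENNReal.toReal_mono (measure_ne_top Q _) (measure_mono (Iic_subset_Iic.2 hst))

lemma cdf_nonneg (Q : Measure ℝ) (s : ℝ) : 0 ≤ cdf Q s := ENNReal.toReal_nonneg

lemma cdf_le_one (Q : Measure ℝ) [IsProbabilityMeasure Q] (s : ℝ) : cdf Q s ≤ 1 := by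
  have h : Q (Set.Iic s) ≤ 1 := prob_le_one
  simpa [cdf] using ENNReal.toReal_mono (by norm_num) h

lemma cdf_measurable (Q : Measure ℝ) [IsFiniteMeasure Q] : Measurable (cdf Q) :=
  (cdf_mono Q).measurable

lemma cdf_eq_zero {a b : ℝ} {Q : Measure ℝ} (hsupp : Q (Set.Icc a b)ᶜ = 0)
    {s : ℝ} (hs : s < a) : cdf Q s = 0 := by
  have h : Q (Set.Iic s) = 0 := by
    refine measure_mono_null (fun t ht => ?_) hsupp
    simp only [Set.mem_compl_iff, Set.mem_Icc, not_and, not_le]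
    intro hat; exact absurd hat (not_le.2 (lt_of_le_of_lt ht hs))
  simp [cdf, h]

lemma meas_Icc {a b : ℝ} {Q : Measure ℝ} [IsProbabilityMeasure Q]
    (hsupp : Q (Set.Icc a b)ᶜ = 0) : Q (Set.Icc a b) = 1 := by
  refine le_antisymm prob_le_one ?_
  have h := measure_union_le (μ := Q) (Set.Icc a b) (Set.Icc a b)ᶜ
  simp only [Set.union_compl_self, measure_univ, hsupp, add_zero] at h
  exact h

lemma cdf_eq_one {a b : ℝ} {Q : Measure ℝ} [IsProbabilityMeasure Q]
    (hsupp : Q (Set.Icc a b)ᶜ = 0) {s : ℝ} (hs : b ≤ s) : cdf Q s = 1 := by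
  have h1 : Q (Set.Iic s) = 1 := by
    refine le_antisymm prob_le_one ?_
    calc (1:ENNReal) = Q (Set.Icc a b) := (meas_Icc hsupp).symm
    _ ≤ Q (Set.Iic s) := measure_mono (fun t ht => le_trans ht.2 hs)
  simp [cdf, h1, ENNReal.toReal_one]

lemma integrableOn_Iic_of_zero_below {a : ℝ} {f : ℝ → ℝ} (hmeas : Measurable f)
    (h0 : ∀ s, s < a → f s = 0) (hb : ∀ s, |f s| ≤ 1) (x : ℝ) :
    IntegrableOn f (Set.Iic x) volume := by
  rcases le_or_gt a x with hax | hax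
  · have hU : Set.Iic x = Set.Iio a ∪ Set.Icc a x := by
      ext t; simp only [Set.mem_Iic, Set.mem_union, Set.mem_Iio, Set.mem_Icc]
      constructor
      · intro ht; rcases lt_or_ge t a with h | h
        · exact Or.inl h
        · exact Or.inr ⟨h, ht⟩
      · rintro (h | h)
        · exact le_trans h.le hax
        · exact h.2
    rw [hU]
    refine IntegrableOn.union ?_ ?_
    · have : Set.EqOn f (fun _ => (0:ℝ)) (Set.Iio a) := fun t ht => h0 t ht
      rw [integrableOn_congr_fun this measurableSet_Iio]
      exact integrableOn_zero
    · refine Measure.integrableOn_of_bounded (M := 1) (measure_Icc_lt_top).ne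
        hmeas.aestronglyMeasurable ?_
      filter_upwards with t using (by simpa using hb t)
  · have : Set.EqOn f (fun _ => (0:ℝ)) (Set.Iic x) :=
      fun t ht => h0 t (lt_of_le_of_lt ht hax)
    rw [integrableOn_congr_fun this measurableSet_Iic]
    exact integrableOn_zero

lemma integrableOn_cdf {a b : ℝ} {Q : Measure ℝ} [IsProbabilityMeasure Q]
    (hsupp : Q (Set.Icc a b)ᶜ = 0) (x : ℝ) :
    IntegrableOn (cdf Q) (Set.Iic x) volume :=
  integrableOn_Iic_of_zero_below (cdf_measurable Q) (fun s hs => cdf_eq_zero hsupp hs)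
    (fun s => abs_le.2 ⟨by linarith [cdf_nonneg Q s], cdf_le_one Q s⟩) x

noncomputable def icdf (Q : Measure ℝ) (x : ℝ) : ℝ := ∫ s in Set.Iic x, cdf Q s

lemma icdf_sub {a b : ℝ} {Q : Measure ℝ} [IsProbabilityMeasure Q]
    (hsupp : Q (Set.Icc a b)ᶜ = 0) {x y : ℝ} (hxy : x ≤ y) :
    icdf Q y - icdf Q x = ∫ s in Set.Ioc x y, cdf Q s := by
  have hU : Set.Iic x ∪ Set.Ioc x y = Set.Iic y := Set.Iic_union_Ioc_eq_Iic hxy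
  have h := setIntegral_union (f := cdf Q) (μ := volume) (Set.Iic_disjoint_Ioc le_rfl)
    measurableSet_Ioc ((integrableOn_cdf hsupp x))
    (((integrableOn_cdf hsupp y)).mono_set Set.Ioc_subset_Iic_self)
  rw [hU] at h
  rw [icdf, icdf, h]; ring

lemma icdf_sub_bounds {a b : ℝ} {Q : Measure ℝ} [IsProbabilityMeasure Q]
    (hsupp : Q (Set.Icc a b)ᶜ = 0) {x y : ℝ} (hxy : x ≤ y) :
    cdf Q x * (y - x) ≤ icdf Q y - icdf Q x ∧
      icdf Q y - icdf Q x ≤ cdf Q y * (y - x) := by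
  rw [icdf_sub hsupp hxy]
  have hvol : (volume (Set.Ioc x y)).toReal = y - x := by
    rw [Real.volume_Ioc, ENNReal.toReal_ofReal (by linarith)]
  have hint : IntegrableOn (cdf Q) (Set.Ioc x y) volume :=
    ((integrableOn_cdf hsupp y)).mono_set Set.Ioc_subset_Iic_self
  constructor
  · have h := setIntegral_mono_on (integrableOn_const measure_Ioc_lt_top.ne) hint
      measurableSet_Ioc (fun t ht => cdf_mono Q ht.1.le)
    rw [setIntegral_const, smul_eq_mul, measureReal_def, hvol] at h
    linarith [h, mul_comm (y - x) (cdf Q x)]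
  · have h := setIntegral_mono_on hint (integrableOn_const measure_Ioc_lt_top.ne)
      measurableSet_Ioc (fun t ht => cdf_mono Q ht.2)
    rw [setIntegral_const, smul_eq_mul, measureReal_def, hvol] at h
    linarith [h, mul_comm (y - x) (cdf Q y)]

lemma ae_ne (c : ℝ) : ∀ᵐ s : ℝ, s ≠ c := by
  have h : {s : ℝ | ¬ s ≠ c} = {c} := by ext t; simp
  rw [ae_iff, h]
  exact measure_singleton c

lemma icdf_eq_zero {a b : ℝ} {Q : Measure ℝ} (hsupp : Q (Set.Icc a b)ᶜ = 0)
    {x : ℝ} (hx : x ≤ a) : icdf Q x = 0 := by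
  rw [icdf, ← integral_zero ℝ ℝ (μ := volume.restrict (Set.Iic x))]
  refine setIntegral_congr_ae measurableSet_Iic ?_
  filter_upwards [ae_ne a] with s hs hsx
  exact cdf_eq_zero hsupp (lt_of_le_of_ne (le_trans hsx hx) (by exact fun h => hs h))


lemma icdf_nonneg (Q : Measure ℝ) (x : ℝ) : 0 ≤ icdf Q x :=
  setIntegral_nonneg measurableSet_Iic (fun s _ => cdf_nonneg Q s)

lemma icdf_mono {Q : Measure ℝ} [IsProbabilityMeasure Q]
    (hsupp : Q (Set.Icc a b)ᶜ = 0) : Monotone (icdf Q) := by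
  intro x y hxy
  have h := (icdf_sub_bounds hsupp hxy).1
  nlinarith [cdf_nonneg Q x]

lemma icdf_le {Q : Measure ℝ} [IsProbabilityMeasure Q]
    (hsupp : Q (Set.Icc a b)ᶜ = 0) {u : ℝ} (hu : a ≤ u) : icdf Q u ≤ u - a := by
  have h := (icdf_sub_bounds hsupp hu).2
  rw [icdf_eq_zero hsupp le_rfl] at h
  nlinarith [cdf_le_one Q u]

lemma icdf_sub_of_ge {Q : Measure ℝ} [IsProbabilityMeasure Q]
    (hsupp : Q (Set.Icc a b)ᶜ = 0) {z : ℝ} (hz : b ≤ z) :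
    icdf Q z - icdf Q b = z - b := by
  rw [icdf_sub hsupp hz]
  rw [setIntegral_congr_fun measurableSet_Ioc (g := fun _ => (1:ℝ))
    (fun s hs => cdf_eq_one hsupp hs.1.le), setIntegral_const, smul_eq_mul, mul_one,
    measureReal_def, Real.volume_Ioc, ENNReal.toReal_ofReal (by linarith)]


lemma icdf_eq_integral_Icc {Q : Measure ℝ} [IsProbabilityMeasure Q]
    (hsupp : Q (Set.Icc a b)ᶜ = 0) {u : ℝ} (hu : a ≤ u) :
    ∫ s in Set.Icc a u, cdf Q s = icdf Q u := by
  have hU : Set.Iio a ∪ Set.Icc a u = Set.Iic u := by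
    ext t
    simp only [Set.mem_union, Set.mem_Iio, Set.mem_Icc, Set.mem_Iic]
    constructor
    · rintro (h | h)
      · exact le_trans h.le hu
      · exact h.2
    · intro ht
      rcases lt_or_ge t a with h | h
      · exact Or.inl h
      · exact Or.inr ⟨h, ht⟩
  have h1 : IntegrableOn (cdf Q) (Set.Iio a) volume := by
    have : Set.EqOn (cdf Q) (fun _ => (0:ℝ)) (Set.Iio a) := fun t ht => cdf_eq_zero hsupp ht
    rw [integrableOn_congr_fun this measurableSet_Iio]
    exact integrableOn_zero
  have h2 : IntegrableOn (cdf Q) (Set.Icc a u) volume :=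
    (integrableOn_cdf hsupp u).mono_set (fun t ht => ht.2)
  have h := setIntegral_union (f := cdf Q) (μ := volume)
    ((Set.Iio_disjoint_Ici le_rfl).mono le_rfl Set.Icc_subset_Ici_self) measurableSet_Icc h1 h2
  rw [hU] at h
  have hz : ∫ s in Set.Iio a, cdf Q s = 0 := by
    rw [setIntegral_congr_fun measurableSet_Iio (g := fun _ => (0:ℝ))
      (fun t ht => cdf_eq_zero hsupp ht)]
    simp
  rw [icdf, h, hz, zero_add]

lemma ae_mem_Icc {Q : Measure ℝ} (hsupp : Q (Set.Icc a b)ᶜ = 0) :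
    ∀ᵐ x ∂Q, x ∈ Set.Icc a b := by
  rw [ae_iff]
  exact measure_mono_null (fun z hz => hz) hsupp

lemma integrableQ {Q : Measure ℝ} [IsProbabilityMeasure Q] (hsupp : Q (Set.Icc a b)ᶜ = 0)
    {f : ℝ → ℝ} (hf : Continuous f) : Integrable f Q := by
  obtain ⟨M, hM⟩ := (isCompact_Icc (a := a) (b := b)).exists_bound_of_continuousOn
    hf.continuousOn
  refine (integrable_const M).mono' hf.aestronglyMeasurable ?_
  filter_upwards [ae_mem_Icc hsupp] with x hx
  exact hM x hx

lemma integralQ_eq {Q : Measure ℝ} [IsProbabilityMeasure Q] (hsupp : Q (Set.Icc a b)ᶜ = 0)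
    {f : ℝ → ℝ} (hf : Integrable f Q) :
    ∫ x, f x ∂Q = ∫ x in Set.Icc a b, f x ∂Q := by
  rw [← integral_add_compl measurableSet_Icc hf]
  have : Q.restrict (Set.Icc a b)ᶜ = 0 := Measure.restrict_eq_zero.2 hsupp
  rw [this]
  simp

lemma poly_sub (p : Polynomial ℝ) {x : ℝ} (hxb : x ≤ b) :
    p.eval b - p.eval x = ∫ u in Set.Ico x b, p.derivative.eval u := by
  have h := intervalIntegral.integral_eq_sub_of_hasDerivAt
    (f := fun t => p.eval t) (f' := fun t => p.derivative.eval t) (a := x) (b := b)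
    (fun t _ => p.hasDerivAt t) ((p.derivative.continuous).intervalIntegrable x b)
  rw [intervalIntegral.integral_of_le hxb, integral_Ioc_eq_integral_Ioo,
    ← integral_Ico_eq_integral_Ioo] at h
  rw [← h]

lemma hQinter {Q : Measure ℝ} (hsupp : Q (Set.Icc a b)ᶜ = 0) (s : ℝ) :
    Q (Set.Iic s ∩ Set.Icc a b) = Q (Set.Iic s) := by
  have h := measure_inter_add_diff (μ := Q) (Set.Iic s) (measurableSet_Icc (a := a) (b := b))
  have h0 : Q (Set.Iic s \ Set.Icc a b) = 0 :=
    measure_mono_null (fun z hz => hz.2) hsupp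
  rw [h0, add_zero] at h
  exact h

lemma integrable_aux {μ : Measure ℝ} [IsFiniteMeasure μ] {f : ℝ × ℝ → ℝ}
    (hmeas : AEStronglyMeasurable f (μ.prod (volume.restrict (Set.Icc a b))))
    {M : ℝ} (hM : ∀ z : ℝ × ℝ, z.2 ∈ Set.Icc a b → ‖f z‖ ≤ M) :
    Integrable f (μ.prod (volume.restrict (Set.Icc a b))) := by
  haveI : IsFiniteMeasure (volume.restrict (Set.Icc a b)) :=
    ⟨by rw [Measure.restrict_apply_univ]; exact measure_Icc_lt_top⟩
  have hprod0 : (μ.prod (volume.restrict (Set.Icc a b)))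
      ((Set.univ : Set ℝ) ×ˢ (Set.Icc a b)ᶜ) = 0 := by
    rw [Measure.prod_prod]
    have h0 : (volume.restrict (Set.Icc a b)) (Set.Icc a b)ᶜ = 0 := by
      rw [Measure.restrict_apply measurableSet_Icc.compl]
      simp
    rw [h0, mul_zero]
  have hae : ∀ᵐ z ∂(μ.prod (volume.restrict (Set.Icc a b))), z.2 ∈ Set.Icc a b := by
    rw [ae_iff]
    refine measure_mono_null (fun z hz => ?_) hprod0
    exact ⟨Set.mem_univ _, hz⟩
  refine (integrable_const M).mono' hmeas ?_
  filter_upwards [hae] with z hz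
  exact hM z hz

lemma measurableSet_S (b : ℝ) :
    MeasurableSet {z : ℝ × ℝ | z.1 ≤ z.2 ∧ z.2 < b} := by
  have : {z : ℝ × ℝ | z.1 ≤ z.2 ∧ z.2 < b}
      = {z : ℝ × ℝ | z.1 ≤ z.2} ∩ (Prod.snd ⁻¹' Set.Iio b) := rfl
  rw [this]
  exact (measurableSet_le measurable_fst measurable_snd).inter
    (measurable_snd measurableSet_Iio)

theorem integral_poly (hab : a < b) (Q : Measure ℝ) [IsProbabilityMeasure Q]
    (hsupp : Q (Set.Icc a b)ᶜ = 0) (p : Polynomial ℝ) :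
    ∫ x, p.eval x ∂Q = p.eval b - p.derivative.eval b * icdf Q b
      + ∫ u in Set.Icc a b, p.derivative.derivative.eval u * icdf Q u := by
  set q := p.derivative with hq
  set r := p.derivative.derivative with hr
  set S := {z : ℝ × ℝ | z.1 ≤ z.2 ∧ z.2 < b} with hS
  haveI : IsFiniteMeasure (volume.restrict (Set.Icc a b)) :=
    ⟨by rw [Measure.restrict_apply_univ]; exact measure_Icc_lt_top⟩
  have hQIcc : (Q (Set.Icc a b)).toReal = 1 := by rw [meas_Icc hsupp]; simp
  -- ### Fubini 1
  set f₁ : ℝ × ℝ → ℝ := S.indicator (fun z => q.eval z.2) with hf₁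
  have hf₁meas : Measurable f₁ :=
    (q.continuous.measurable.comp measurable_snd).indicator (measurableSet_S b)
  obtain ⟨M₁, hM₁⟩ := (isCompact_Icc (a := a) (b := b)).exists_bound_of_continuousOn
    (q.continuous).continuousOn
  have hf₁int : Integrable f₁ ((Q.restrict (Set.Icc a b)).prod
      (volume.restrict (Set.Icc a b))) := by
    refine integrable_aux hf₁meas.aestronglyMeasurable (M := M₁) (fun z hz => ?_)
    by_cases hmem : z ∈ S
    · rw [hf₁, Set.indicator_of_mem hmem]
      exact hM₁ z.2 hz
    · rw [hf₁, Set.indicator_of_notMem hmem]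
      simpa using le_trans (abs_nonneg _) (hM₁ z.2 hz)
  have hswap1 := integral_integral_swap (μ := Q.restrict (Set.Icc a b))
    (ν := volume.restrict (Set.Icc a b)) (f := fun x s => f₁ (x, s)) hf₁int
  -- inner integral in x-form: for x ∈ Icc a b
  have hinner1 : ∀ x ∈ Set.Icc a b,
      ∫ s in Set.Icc a b, f₁ (x, s) = p.eval b - p.eval x := by
    intro x hx
    have hfun : (fun s => f₁ (x, s)) = (Set.Ico x b).indicator (fun s => q.eval s) := by
      funext s
      simp only [hf₁, hS, Set.indicator_apply, Set.mem_setOf_eq, Set.mem_Ico]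
    have hsub : Set.Icc a b ∩ Set.Ico x b = Set.Ico x b :=
      Set.inter_eq_right.2 (fun s hs => ⟨le_trans hx.1 hs.1, hs.2.le⟩)
    rw [hfun, setIntegral_indicator measurableSet_Ico, hsub, ← poly_sub p hx.2]
  -- outer integral in s-form
  have houter1 : (fun s => ∫ x in Set.Icc a b, f₁ (x, s) ∂Q)
      =ᵐ[volume.restrict (Set.Icc a b)] (fun s => q.eval s * cdf Q s) := by
    filter_upwards [ae_restrict_mem measurableSet_Icc,
      ae_restrict_of_ae (ae_ne b)] with s hs hsb
    have hsb' : s < b := lt_of_le_of_ne hs.2 hsb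
    have hfun : (fun x => f₁ (x, s)) = (Set.Iic s).indicator (fun _ => q.eval s) := by
      funext x
      simp [hf₁, hS, Set.indicator_apply, Set.mem_setOf_eq, hsb']
    rw [hfun, setIntegral_indicator measurableSet_Iic, setIntegral_const, measureReal_def,
      Set.inter_comm, hQinter hsupp s]
    simp [cdf, mul_comm]
  -- Step 1 conclusion
  have hpint : Integrable (fun x => p.eval x) Q := integrableQ hsupp p.continuous
  have hstep1 : ∫ x, p.eval x ∂Q
      = p.eval b - ∫ s in Set.Icc a b, q.eval s * cdf Q s := by
    rw [integralQ_eq hsupp hpint]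
    have e1 : ∫ x in Set.Icc a b, p.eval x ∂Q
        = ∫ x in Set.Icc a b, (p.eval b - (p.eval b - p.eval x)) ∂Q := by
      refine setIntegral_congr_fun measurableSet_Icc (fun x _ => ?_)
      ring
    have hint2 : IntegrableOn (fun x => p.eval b - p.eval x) (Set.Icc a b) Q :=
      (integrableQ hsupp (continuous_const.sub p.continuous)).integrableOn
    have e2 : ∫ x in Set.Icc a b, (p.eval b - p.eval x) ∂Q
        = ∫ s in Set.Icc a b, q.eval s * cdf Q s := by
      have e3 : ∫ x in Set.Icc a b, (p.eval b - p.eval x) ∂Q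
          = ∫ x in Set.Icc a b, (∫ s in Set.Icc a b, f₁ (x, s)) ∂Q := by
        refine setIntegral_congr_fun measurableSet_Icc (fun x hx => ?_)
        rw [hinner1 x hx]
      rw [e3, hswap1]
      exact integral_congr_ae houter1
    rw [e1, integral_sub (integrableOn_const (C := p.eval b) (s := Set.Icc a b) (μ := Q) (measure_lt_top _ _).ne) hint2,
      setIntegral_const, measureReal_def, hQIcc, one_smul, e2]
  -- ### Fubini 2
  set f₂ : ℝ × ℝ → ℝ := fun z => S.indicator (fun z => r.eval z.2) z * cdf Q z.1 with hf₂
  have hf₂meas : Measurable f₂ :=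
    ((r.continuous.measurable.comp measurable_snd).indicator (measurableSet_S b)).mul
      ((cdf_measurable Q).comp measurable_fst)
  obtain ⟨M₂, hM₂⟩ := (isCompact_Icc (a := a) (b := b)).exists_bound_of_continuousOn
    (r.continuous).continuousOn
  have hM₂0 : 0 ≤ M₂ := le_trans (norm_nonneg _) (hM₂ a ⟨le_refl a, hab.le⟩)
  have hf₂int : Integrable f₂ ((volume.restrict (Set.Icc a b)).prod
      (volume.restrict (Set.Icc a b))) := by
    refine integrable_aux hf₂meas.aestronglyMeasurable (M := M₂) (fun z hz => ?_)
    rw [hf₂]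
    rw [norm_mul]
    have h1 : ‖S.indicator (fun z : ℝ × ℝ => r.eval z.2) z‖ ≤ M₂ := by
      by_cases hmem : z ∈ S
      · rw [Set.indicator_of_mem hmem]; exact hM₂ z.2 hz
      · rw [Set.indicator_of_notMem hmem]; simpa using hM₂0
    have h2 : ‖cdf Q z.1‖ ≤ 1 := by
      rw [Real.norm_eq_abs, abs_of_nonneg (cdf_nonneg Q z.1)]
      exact cdf_le_one Q z.1
    calc ‖S.indicator (fun z : ℝ × ℝ => r.eval z.2) z‖ * ‖cdf Q z.1‖
        ≤ M₂ * 1 := mul_le_mul h1 h2 (norm_nonneg _) hM₂0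
    _ = M₂ := mul_one M₂
  have hswap2 := integral_integral_swap (μ := volume.restrict (Set.Icc a b))
    (ν := volume.restrict (Set.Icc a b)) (f := fun s u => f₂ (s, u)) hf₂int
  -- pre-swap: for s ∈ Icc a b
  have hinner2 : ∀ s ∈ Set.Icc a b,
      ∫ u in Set.Icc a b, f₂ (s, u) = (q.eval b - q.eval s) * cdf Q s := by
    intro s hs
    have e : ∫ u in Set.Icc a b, f₂ (s, u)
        = (∫ u in Set.Icc a b, S.indicator (fun z : ℝ × ℝ => r.eval z.2) (s, u))
            * cdf Q s := by
      rw [← integral_mul_const]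
    rw [e]
    have hfun : (fun u => S.indicator (fun z : ℝ × ℝ => r.eval z.2) (s, u))
        = (Set.Ico s b).indicator (fun u => r.eval u) := by
      funext u
      simp only [hS, Set.indicator_apply, Set.mem_setOf_eq, Set.mem_Ico]
    have hsub2 : Set.Icc a b ∩ Set.Ico s b = Set.Ico s b :=
      Set.inter_eq_right.2 (fun u hu => ⟨le_trans hs.1 hu.1, hu.2.le⟩)
    rw [hfun, setIntegral_indicator measurableSet_Ico, hsub2, ← poly_sub q hs.2]
  -- post-swap: a.e. u
  have houter2 : (fun u => ∫ s in Set.Icc a b, f₂ (s, u))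
      =ᵐ[volume.restrict (Set.Icc a b)] (fun u => r.eval u * icdf Q u) := by
    filter_upwards [ae_restrict_mem measurableSet_Icc,
      ae_restrict_of_ae (ae_ne b)] with u hu hub
    have hub' : u < b := lt_of_le_of_ne hu.2 hub
    have hfun : (fun s => f₂ (s, u))
        = (Set.Iic u).indicator (fun s => r.eval u * cdf Q s) := by
      funext s
      by_cases hsu : s ≤ u
      · simp [hf₂, hS, Set.indicator_apply, hsu, hub']
      · simp [hf₂, hS, Set.indicator_apply, hsu]
    have hIU : Set.Icc a b ∩ Set.Iic u = Set.Icc a u := by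
      ext t
      simp only [Set.mem_inter_iff, Set.mem_Icc, Set.mem_Iic]
      constructor
      · rintro ⟨⟨h1, _⟩, h3⟩; exact ⟨h1, h3⟩
      · rintro ⟨h1, h2⟩; exact ⟨⟨h1, le_trans h2 hu.2⟩, h2⟩
    rw [hfun, setIntegral_indicator measurableSet_Iic, hIU, integral_const_mul,
      icdf_eq_integral_Icc hsupp hu.1]
  -- Step 2 conclusion
  have hcdfInt : IntegrableOn (cdf Q) (Set.Icc a b) volume :=
    (integrableOn_cdf hsupp b).mono_set (fun t ht => ht.2)
  have hstep2 : ∫ s in Set.Icc a b, q.eval s * cdf Q s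
      = q.eval b * icdf Q b - ∫ u in Set.Icc a b, r.eval u * icdf Q u := by
    have e1 : ∫ s in Set.Icc a b, q.eval s * cdf Q s
        = ∫ s in Set.Icc a b, (q.eval b * cdf Q s - (q.eval b - q.eval s) * cdf Q s) := by
      refine setIntegral_congr_fun measurableSet_Icc (fun s _ => ?_)
      ring
    have hA : IntegrableOn (fun s => q.eval b * cdf Q s) (Set.Icc a b) volume :=
      (hcdfInt.const_mul _)
    have hB : IntegrableOn (fun s => (q.eval b - q.eval s) * cdf Q s)
        (Set.Icc a b) volume := by
      obtain ⟨M₃, hM₃⟩ := (isCompact_Icc (a := a) (b := b)).exists_bound_of_continuousOn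
        (continuous_const.sub q.continuous).continuousOn
      refine Measure.integrableOn_of_bounded (M := M₃ * 1) (measure_Icc_lt_top).ne
        (((continuous_const.sub q.continuous).measurable.mul
          (cdf_measurable Q)).aestronglyMeasurable) ?_
      filter_upwards [ae_restrict_mem measurableSet_Icc] with s hs
      rw [norm_mul]
      refine mul_le_mul (hM₃ s hs) ?_ (norm_nonneg _)
        (le_trans (norm_nonneg _) (hM₃ s hs))
      rw [Real.norm_eq_abs, abs_of_nonneg (cdf_nonneg Q s)]
      exact cdf_le_one Q s
    have e2 : ∫ s in Set.Icc a b, (q.eval b - q.eval s) * cdf Q s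
        = ∫ u in Set.Icc a b, r.eval u * icdf Q u := by
      have e3 : ∫ s in Set.Icc a b, (q.eval b - q.eval s) * cdf Q s
          = ∫ s in Set.Icc a b, (∫ u in Set.Icc a b, f₂ (s, u)) := by
        refine setIntegral_congr_fun measurableSet_Icc (fun s hs => ?_)
        rw [hinner2 s hs]
      rw [e3, hswap2]
      exact integral_congr_ae houter2
    have e4 : ∫ s in Set.Icc a b, q.eval b * cdf Q s = q.eval b * icdf Q b := by
      rw [integral_const_mul, icdf_eq_integral_Icc hsupp hab.le]
    rw [e1, integral_sub hA hB, e4, e2]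
  rw [hstep1, hstep2]
  ring


end ICdfAux

open ICdfAux

/-- Corollary A.6: if `Gⁿ` are the (convex) integrated distribution
functions of probability measures `Pⁿ` supported in `[a,b]` and `Gⁿ → G` uniformly on
compact sets, then `G` is the integrated distribution function of a probability measure
`P` supported in `[a,b]` and `Pⁿ → P` weakly. -/
theorem integrated_cdf_uniform_limit (a b : ℝ) (hab : a < b)
    (P : ℕ → Measure ℝ) (hP : ∀ n, IsProbabilityMeasure (P n))
    (hPsupp : ∀ n, P n (Set.Icc a b)ᶜ = 0)
    (G : ℝ → ℝ)
    (hGconv : ∀ R : ℝ, 0 < R →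
      TendstoUniformlyOn
        (fun n x => ∫ s in Set.Iic x, ((P n) (Set.Iic s)).toReal)
        G atTop (Set.Icc (-R) R)) :
    ∃ Plim : Measure ℝ, IsProbabilityMeasure Plim ∧ Plim (Set.Icc a b)ᶜ = 0 ∧
      (∀ x : ℝ, G x = ∫ s in Set.Iic x, (Plim (Set.Iic s)).toReal) ∧
      ∀ f : ℝ → ℝ, Continuous f → (∃ C, ∀ x, |f x| ≤ C) →
        Tendsto (fun n => ∫ x, f x ∂(P n)) atTop (𝓝 (∫ x, f x ∂Plim)) := by
  classical
  haveI hPn : ∀ n, IsProbabilityMeasure (P n) := hP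
  have hGconv' : ∀ R : ℝ, 0 < R →
      TendstoUniformlyOn (fun n x => icdf (P n) x) G atTop (Set.Icc (-R) R) := hGconv
  -- pointwise convergence
  have hptw : ∀ x : ℝ, Tendsto (fun n => icdf (P n) x) atTop (𝓝 (G x)) := by
    intro x
    have hx : x ∈ Set.Icc (-(|x| + 1)) (|x| + 1) :=
      ⟨by linarith [neg_abs_le x], by linarith [le_abs_self x]⟩
    exact (hGconv' (|x| + 1) (by positivity)).tendsto_at hx
  have hG0 : ∀ x, x ≤ a → G x = 0 := by
    intro x hx
    refine tendsto_nhds_unique (hptw x) ?_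
    rw [show (fun n => icdf (P n) x) = fun _ => (0:ℝ) from
      funext fun n => icdf_eq_zero (hPsupp n) hx]
    exact tendsto_const_nhds
  have hGdiff : ∀ x y : ℝ, x ≤ y → 0 ≤ G y - G x ∧ G y - G x ≤ y - x := by
    intro x y hxy
    have ht : Tendsto (fun n => icdf (P n) y - icdf (P n) x) atTop (𝓝 (G y - G x)) :=
      (hptw y).sub (hptw x)
    constructor
    · refine le_of_tendsto_of_tendsto' tendsto_const_nhds ht (fun n => ?_)
      have h := (icdf_sub_bounds (hPsupp n) hxy).1
      nlinarith [cdf_nonneg (P n) x]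
    · refine le_of_tendsto_of_tendsto' ht tendsto_const_nhds (fun n => ?_)
      have h := (icdf_sub_bounds (hPsupp n) hxy).2
      nlinarith [cdf_le_one (P n) y, cdf_nonneg (P n) y]
  have hslope_step : ∀ x y z : ℝ, x < y → y < z →
      (G y - G x) * (z - y) ≤ (G z - G y) * (y - x) := by
    intro x y z hxy hyz
    have h1 : Tendsto (fun n => (icdf (P n) y - icdf (P n) x) * (z - y)) atTop
        (𝓝 ((G y - G x) * (z - y))) := ((hptw y).sub (hptw x)).mul_const _
    have h2 : Tendsto (fun n => (icdf (P n) z - icdf (P n) y) * (y - x)) atTop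
        (𝓝 ((G z - G y) * (y - x))) := ((hptw z).sub (hptw y)).mul_const _
    refine le_of_tendsto_of_tendsto' h1 h2 (fun n => ?_)
    have ha := (icdf_sub_bounds (hPsupp n) hxy.le).2
    have hb := (icdf_sub_bounds (hPsupp n) hyz.le).1
    nlinarith [mul_le_mul_of_nonneg_right ha (by linarith : (0:ℝ) ≤ z - y),
      mul_le_mul_of_nonneg_right hb (by linarith : (0:ℝ) ≤ y - x)]
  have hGcont : Continuous G := by
    have hl : LipschitzWith 1 G := by
      refine LipschitzWith.of_dist_le_mul (fun x y => ?_)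
      rw [Real.dist_eq, Real.dist_eq, NNReal.coe_one, one_mul]
      rcases le_total x y with h | h
      · obtain ⟨h1, h2⟩ := hGdiff x y h
        rw [abs_sub_comm, abs_sub_comm x y]
        rw [abs_of_nonneg (by linarith : (0:ℝ) ≤ y - x)]
        exact abs_le.2 ⟨by linarith, h2⟩
      · obtain ⟨h1, h2⟩ := hGdiff y x h
        rw [abs_of_nonneg (by linarith : (0:ℝ) ≤ x - y)]
        exact abs_le.2 ⟨by linarith, h2⟩
    exact hl.continuous
  -- the slope function and right derivative
  set hseq : ℕ → ℝ := fun k => ((k : ℝ) + 1)⁻¹ with hhseq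
  have hseq_pos : ∀ k, 0 < hseq k := fun k => by positivity
  have hseq_anti : ∀ k l, k ≤ l → hseq l ≤ hseq k := by
    intro k l hkl
    have : ((k : ℝ) + 1) ≤ (l : ℝ) + 1 := by exact_mod_cast Nat.add_le_add_right hkl 1
    exact inv_anti₀ (by positivity) this
  have hseq0 : Tendsto hseq atTop (𝓝 0) := by
    have := tendsto_one_div_add_atTop_nhds_zero_nat (𝕜 := ℝ)
    simpa [hhseq, one_div] using this
  have hseq_small : ∀ ε : ℝ, 0 < ε → ∃ k : ℕ, hseq k < ε := by
    intro ε hε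
    obtain ⟨k, hk⟩ := exists_nat_one_div_lt hε
    exact ⟨k, by simpa [hhseq, one_div] using hk⟩
  set sl : ℝ → ℝ → ℝ := fun x y => (G y - G x) / (y - x) with hsl
  have sl_nonneg : ∀ x y, x < y → 0 ≤ sl x y := fun x y h =>
    div_nonneg (hGdiff x y h.le).1 (by linarith)
  have sl_le_one : ∀ x y, x < y → sl x y ≤ 1 := by
    intro x y h
    rw [hsl]
    rw [div_le_one (by linarith : (0:ℝ) < y - x)]
    linarith [(hGdiff x y h.le).2]
  have sl_mono2 : ∀ x y z, x < y → y < z → sl x y ≤ sl x z := by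
    intro x y z h1 h2
    rw [hsl, div_le_div_iff₀ (by linarith) (by linarith)]
    nlinarith [hslope_step x y z h1 h2]
  have sl_adj : ∀ x y z, x < y → y < z → sl x y ≤ sl y z := by
    intro x y z h1 h2
    rw [hsl, div_le_div_iff₀ (by linarith) (by linarith)]
    nlinarith [hslope_step x y z h1 h2]
  have sl_mono1 : ∀ x y z, x < y → y < z → sl x z ≤ sl y z := by
    intro x y z h1 h2
    rw [hsl, div_le_div_iff₀ (by linarith) (by linarith)]
    nlinarith [hslope_step x y z h1 h2]
  set F : ℝ → ℝ := fun t => ⨅ k : ℕ, sl t (t + hseq k) with hF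
  have hbdd : ∀ t, BddBelow (Set.range fun k : ℕ => sl t (t + hseq k)) := by
    intro t
    refine ⟨0, ?_⟩
    rintro _ ⟨k, rfl⟩
    exact sl_nonneg _ _ (by linarith [hseq_pos k])
  have F_le_term : ∀ t (k : ℕ), F t ≤ sl t (t + hseq k) := fun t k => ciInf_le (hbdd t) k
  have F_nonneg : ∀ t, 0 ≤ F t := fun t =>
    le_ciInf (fun k => sl_nonneg _ _ (by linarith [hseq_pos k]))
  have F_le_sl : ∀ t y, t < y → F t ≤ sl t y := by
    intro t y hty
    obtain ⟨k, hk⟩ := hseq_small (y - t) (by linarith)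
    rcases eq_or_lt_of_le (le_of_lt (show t + hseq k < y by linarith)) with he | hlt
    · exact le_trans (F_le_term t k) (le_of_eq (by rw [he]))
    · exact le_trans (F_le_term t k)
        (sl_mono2 t (t + hseq k) y (by linarith [hseq_pos k]) hlt)
  have F_le_one : ∀ t, F t ≤ 1 := fun t =>
    le_trans (F_le_term t 0) (sl_le_one _ _ (by linarith [hseq_pos 0]))
  have F_mono : Monotone F := by
    intro x y hxy
    rcases eq_or_lt_of_le hxy with rfl | hxy'
    · exact le_rfl
    · refine le_ciInf (fun k => ?_)
      have h1 : F x ≤ sl x (y + hseq k) := F_le_sl x _ (by linarith [hseq_pos k])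
      have h2 : sl x (y + hseq k) ≤ sl y (y + hseq k) :=
        sl_mono1 x y (y + hseq k) hxy' (by linarith [hseq_pos k])
      linarith
  have F_zero : ∀ t, t < a → F t = 0 := by
    intro t ht
    refine le_antisymm ?_ (F_nonneg t)
    have h : sl t ((t + a)/2) = 0 := by
      show (G ((t + a)/2) - G t) / ((t + a)/2 - t) = 0
      rw [hG0 _ (by linarith), hG0 _ (by linarith)]
      simp
    calc F t ≤ sl t ((t + a)/2) := F_le_sl t _ (by linarith)
    _ = 0 := h
  have hGaff : ∀ z, b ≤ z → G z - G b = z - b := by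
    intro z hz
    have ht : Tendsto (fun n => icdf (P n) z - icdf (P n) b) atTop (𝓝 (G z - G b)) :=
      (hptw z).sub (hptw b)
    rw [show (fun n => icdf (P n) z - icdf (P n) b) = fun _ => z - b from
      funext fun n => icdf_sub_of_ge (hPsupp n) hz] at ht
    exact (tendsto_nhds_unique ht tendsto_const_nhds)
  have F_one : ∀ t, b ≤ t → F t = 1 := by
    intro t ht
    have hterm : ∀ k : ℕ, sl t (t + hseq k) = 1 := by
      intro k
      have h1 := hGaff t ht
      have h2 := hGaff (t + hseq k) (by linarith [hseq_pos k])
      show (G (t + hseq k) - G t) / (t + hseq k - t) = 1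
      have he : G (t + hseq k) - G t = hseq k := by linarith
      rw [he, add_sub_cancel_left]
      exact div_self (hseq_pos k).ne'
    rw [hF]
    simp only [hterm]
    exact ciInf_const
  have F_rc : ∀ x, ContinuousWithinAt F (Set.Ici x) x := by
    intro x
    rw [Metric.continuousWithinAt_iff]
    intro ε hε
    have hlt : F x < F x + ε/2 := by linarith
    obtain ⟨k, hk⟩ := exists_lt_of_ciInf_lt (f := fun k : ℕ => sl x (x + hseq k)) hlt
    set y := x + hseq k with hy
    have hxy : x < y := by rw [hy]; linarith [hseq_pos k]
    have hcont : ContinuousAt (fun t => (G y - G t) / (y - t)) x := by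
      refine ContinuousAt.div ((continuous_const.sub hGcont).continuousAt)
        ((continuous_const.sub continuous_id).continuousAt) ?_
      exact sub_ne_zero.2 hxy.ne'
    have hval : (fun t => (G y - G t) / (y - t)) x = sl x y := rfl
    have hev : ∀ᶠ t in 𝓝 x, (G y - G t) / (y - t) < F x + ε := by
      have : sl x y < F x + ε := by linarith
      exact hcont (Iio_mem_nhds (by rw [hval]; exact this))
    obtain ⟨δ, hδpos, hδ⟩ := Metric.eventually_nhds_iff.1 hev
    refine ⟨min δ (y - x), lt_min hδpos (by linarith), fun t ht hdist => ?_⟩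
    rcases eq_or_lt_of_le (Set.mem_Ici.1 ht) with rfl | hxt
    · simpa using hε
    · have ht1 : dist t x < δ := lt_of_lt_of_le hdist (min_le_left _ _)
      have ht2 : t < y := by
        have := lt_of_lt_of_le hdist (min_le_right _ _)
        rw [Real.dist_eq, abs_of_pos (by linarith : (0:ℝ) < t - x)] at this
        linarith
      have hFt : F t ≤ (G y - G t) / (y - t) := F_le_sl t y ht2
      have hFt2 : (G y - G t) / (y - t) < F x + ε := hδ ht1
      have hFx : F x ≤ F t := F_mono hxt.le
      rw [Real.dist_eq]
      rw [abs_of_nonneg (by linarith : (0:ℝ) ≤ F t - F x)]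
      linarith
  set StF : StieltjesFunction ℝ := ⟨F, F_mono, F_rc⟩ with hStF
  have hFbot : Tendsto F atBot (𝓝 0) := by
    refine tendsto_const_nhds.congr' ?_
    filter_upwards [eventually_le_atBot (a - 1)] with t ht
    exact (F_zero t (by linarith)).symm
  have hFtop : Tendsto F atTop (𝓝 1) := by
    refine tendsto_const_nhds.congr' ?_
    filter_upwards [eventually_ge_atTop b] with t ht
    exact (F_one t ht).symm
  set Plim := StF.measure with hPlimdef
  haveI hPlimProb : IsProbabilityMeasure Plim :=
    StF.isProbabilityMeasure hFbot hFtop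
  have hIic : ∀ x, Plim (Set.Iic x) = ENNReal.ofReal (F x) := by
    intro x
    rw [hPlimdef, StF.measure_Iic hFbot x, sub_zero]
  have hIicb : Plim (Set.Iic b) = 1 := by
    rw [hIic, F_one b le_rfl]
    simp
  have hIoi : Plim (Set.Ioi b) = 0 := by
    have h := measure_compl (μ := Plim) (s := Set.Iic b) measurableSet_Iic (measure_ne_top _ _)
    rw [Set.compl_Iic] at h
    rw [h, hIicb, measure_univ]
    simp
  have hIio : Plim (Set.Iio a) = 0 := by
    have hsub : Set.Iio a ⊆ ⋃ k : ℕ, Set.Iic (a - hseq k) := by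
      intro t ht
      obtain ⟨k, hk⟩ := hseq_small (a - t) (by simpa using ht)
      exact Set.mem_iUnion.2 ⟨k, by simp only [Set.mem_Iic]; linarith⟩
    refine measure_mono_null hsub (measure_iUnion_null (fun k => ?_))
    rw [hIic, F_zero _ (by linarith [hseq_pos k])]
    simp
  have hsuppPlim : Plim (Set.Icc a b)ᶜ = 0 := by
    have hcompl : (Set.Icc a b)ᶜ = Set.Iio a ∪ Set.Ioi b := by
      ext t
      simp only [Set.mem_compl_iff, Set.mem_Icc, not_and_or, not_le, Set.mem_union,
        Set.mem_Iio, Set.mem_Ioi]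
    rw [hcompl]
    exact measure_union_null hIio hIoi
  have hcdfPlim : ∀ s, cdf Plim s = F s := by
    intro s
    rw [cdf, hIic, ENNReal.toReal_ofReal (F_nonneg s)]
  -- G is the integral of F
  have hGkey : ∀ x y : ℝ, x ≤ y → G y - G x = ∫ t in x..y, F t := by
    intro x y hxy
    rcases eq_or_lt_of_le hxy with rfl | hxy'
    · simp
    have hptF : ∀ t : ℝ, Tendsto (fun k => (G (t + hseq k) - G t) / hseq k) atTop (𝓝 (F t)) := by
      intro t
      have heq : ∀ k : ℕ, (G (t + hseq k) - G t) / hseq k = sl t (t + hseq k) := by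
        intro k
        show _ = (G (t + hseq k) - G t) / (t + hseq k - t)
        rw [add_sub_cancel_left]
      simp only [heq]
      refine tendsto_atTop_ciInf ?_ (hbdd t)
      intro k l hkl
      rcases eq_or_lt_of_le (hseq_anti k l hkl) with he | hlt
      · exact le_of_eq (congrArg (fun z => sl t (t + z)) he)
      · exact sl_mono2 t (t + hseq l) (t + hseq k) (by linarith [hseq_pos l]) (by linarith)
    have hlim1 : Tendsto (fun k => ∫ t in x..y, (G (t + hseq k) - G t) / hseq k) atTop
        (𝓝 (∫ t in x..y, F t)) := by
      refine intervalIntegral.tendsto_integral_filter_of_dominated_convergence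
        (bound := fun _ => 1) ?_ ?_ ?_ ?_
      · filter_upwards with k
        exact (((hGcont.comp (continuous_id.add continuous_const)).sub
          hGcont).div_const _).aestronglyMeasurable
      · filter_upwards with k
        filter_upwards with t
        intro _
        obtain ⟨h1, h2⟩ := hGdiff t (t + hseq k) (by linarith [hseq_pos k])
        rw [Real.norm_eq_abs, abs_div, abs_of_pos (hseq_pos k), abs_of_nonneg h1,
          div_le_one (hseq_pos k)]
        linarith
      · exact intervalIntegrable_const
      · filter_upwards with t
        exact fun _ => hptF t
    have hGi : ∀ u v : ℝ, IntervalIntegrable G volume u v := fun u v =>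
      hGcont.intervalIntegrable u v
    have hcomp : ∀ k : ℕ, ∫ t in x..y, (G (t + hseq k) - G t) / hseq k
        = (∫ t in y..(y + hseq k), G t) / hseq k - (∫ t in x..(x + hseq k), G t) / hseq k := by
      intro k
      have hGi' : IntervalIntegrable (fun t => G (t + hseq k)) volume x y :=
        (hGcont.comp (continuous_id.add continuous_const)).intervalIntegrable x y
      have e1 : ∀ t : ℝ, (G (t + hseq k) - G t) / hseq k
          = (fun t => G (t + hseq k) - G t) t / hseq k := fun t => rfl
      rw [show (fun t => (G (t + hseq k) - G t) / hseq k)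
          = fun t => (G (t + hseq k) - G t) / hseq k from rfl]
      rw [intervalIntegral.integral_div]
      rw [intervalIntegral.integral_sub hGi' (hGi x y)]
      rw [intervalIntegral.integral_comp_add_right (fun t => G t) (hseq k)]
      have hch1 : ∫ t in (x + hseq k)..(y + hseq k), G t
          = (∫ t in (x + hseq k)..y, G t) + ∫ t in y..(y + hseq k), G t :=
        (intervalIntegral.integral_add_adjacent_intervals (hGi _ _) (hGi _ _)).symm
      have hch2 : ∫ t in x..y, G t
          = (∫ t in x..(x + hseq k), G t) + ∫ t in (x + hseq k)..y, G t :=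
        (intervalIntegral.integral_add_adjacent_intervals (hGi _ _) (hGi _ _)).symm
      rw [hch1, hch2]
      ring
    have hd : ∀ c : ℝ, Tendsto (fun k => (∫ t in c..(c + hseq k), G t) / hseq k) atTop
        (𝓝 (G c)) := by
      intro c
      have hD : HasDerivAt (fun u => ∫ t in c..u, G t) (G c) c :=
        (hGcont.integral_hasStrictDerivAt c c).hasDerivAt
      have hs := hasDerivAt_iff_tendsto_slope.1 hD
      have hseqt : Tendsto (fun k => c + hseq k) atTop (𝓝[≠] c) := by
        refine tendsto_nhdsWithin_of_tendsto_nhds_of_eventually_within _ ?_ ?_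
        · have : Tendsto (fun k => c + hseq k) atTop (𝓝 (c + 0)) :=
            tendsto_const_nhds.add hseq0
          simpa using this
        · filter_upwards with k
          simp only [Set.mem_compl_iff, Set.mem_singleton_iff]
          intro hc
          nlinarith [hseq_pos k]
      have hcomp2 := hs.comp hseqt
      refine hcomp2.congr (fun k => ?_)
      show slope (fun u => ∫ t in c..u, G t) c (c + hseq k) = _
      rw [slope_def_field]
      rw [intervalIntegral.integral_same]
      rw [add_sub_cancel_left]
      ring
    have h2 : Tendsto (fun k => ∫ t in x..y, (G (t + hseq k) - G t) / hseq k) atTop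
        (𝓝 (G y - G x)) := by
      simp only [hcomp]
      exact (hd y).sub (hd x)
    exact tendsto_nhds_unique h2 hlim1
  have hGicdf : ∀ x, G x = icdf Plim x := by
    intro x
    rcases le_or_gt x a with hx | hx
    · rw [hG0 x hx, icdf_eq_zero hsuppPlim hx]
    · have h1 : G x - G a = ∫ t in a..x, F t := hGkey a x hx.le
      rw [hG0 a le_rfl, sub_zero] at h1
      have h2 : icdf Plim x - icdf Plim a = ∫ s in Set.Ioc a x, cdf Plim s :=
        icdf_sub hsuppPlim hx.le
      rw [icdf_eq_zero hsuppPlim le_rfl, sub_zero] at h2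
      rw [h1, intervalIntegral.integral_of_le hx.le, h2]
      exact setIntegral_congr_fun measurableSet_Ioc (fun s _ => (hcdfPlim s).symm)
  -- polynomial convergence
  have hpoly : ∀ p : Polynomial ℝ, Tendsto (fun n => ∫ x, p.eval x ∂(P n)) atTop
      (𝓝 (∫ x, p.eval x ∂Plim)) := by
    intro p
    have hform : ∀ n, ∫ x, p.eval x ∂(P n)
        = p.eval b - p.derivative.eval b * icdf (P n) b
          + ∫ u in Set.Icc a b, p.derivative.derivative.eval u * icdf (P n) u :=
      fun n => integral_poly hab (P n) (hPsupp n) p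
    have hformP : ∫ x, p.eval x ∂Plim
        = p.eval b - p.derivative.eval b * G b
          + ∫ u in Set.Icc a b, p.derivative.derivative.eval u * G u := by
      rw [integral_poly hab Plim hsuppPlim p, ← hGicdf b]
      congr 1
      refine setIntegral_congr_fun measurableSet_Icc (fun u _ => ?_)
      rw [← hGicdf u]
    set r := p.derivative.derivative with hr
    obtain ⟨M, hM⟩ := (isCompact_Icc (a := a) (b := b)).exists_bound_of_continuousOn
      r.continuous.continuousOn
    have hM0 : 0 ≤ M := le_trans (norm_nonneg _) (hM a ⟨le_rfl, hab.le⟩)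
    have hIccsub : Set.Icc a b ⊆ Set.Icc (-(max |a| |b| + 1)) (max |a| |b| + 1) := by
      intro t ht
      constructor
      · have h1 : -(max |a| |b| + 1) ≤ a := by
          have := neg_abs_le a
          have := le_max_left |a| |b|
          linarith
        linarith [ht.1]
      · have h2 : b ≤ max |a| |b| + 1 := by
          have := le_abs_self b
          have := le_max_right |a| |b|
          linarith
        linarith [ht.2]
    have hthird : Tendsto (fun n => ∫ u in Set.Icc a b, r.eval u * icdf (P n) u) atTop
        (𝓝 (∫ u in Set.Icc a b, r.eval u * G u)) := by
      rw [Metric.tendsto_atTop]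
      intro ε hε
      set δ := ε / (M * (b - a) + 1) with hδdef
      have hδpos : 0 < δ := by
        refine div_pos hε ?_
        nlinarith
      have hR : (0:ℝ) < max |a| |b| + 1 := by positivity
      have hunif := (Metric.tendstoUniformlyOn_iff.1 (hGconv' _ hR)) δ hδpos
      rw [eventually_atTop] at hunif
      obtain ⟨N, hN⟩ := hunif
      refine ⟨N, fun n hn => ?_⟩
      have hdist : ∀ u ∈ Set.Icc a b, |icdf (P n) u - G u| ≤ δ := by
        intro u hu
        have := hN n hn u (hIccsub hu)
        rw [Real.dist_eq] at this
        rw [abs_sub_comm]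
        exact this.le
      have hint1 : IntegrableOn (fun u => r.eval u * icdf (P n) u) (Set.Icc a b) volume := by
        refine Measure.integrableOn_of_bounded (M := M * (b - a)) measure_Icc_lt_top.ne
          ((r.continuous.measurable.mul (icdf_mono (hPsupp n)).measurable).aestronglyMeasurable) ?_
        filter_upwards [ae_restrict_mem measurableSet_Icc] with u hu
        rw [norm_mul]
        refine mul_le_mul (hM u hu) ?_ (norm_nonneg _) hM0
        rw [Real.norm_eq_abs, abs_of_nonneg (icdf_nonneg _ _)]
        exact le_trans (icdf_le (hPsupp n) hu.1) (by linarith [hu.2])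
      have hint2 : IntegrableOn (fun u => r.eval u * G u) (Set.Icc a b) volume :=
        (r.continuous.mul hGcont).integrableOn_Icc
      rw [Real.dist_eq, ← integral_sub hint1 hint2]
      have hbnd : ∀ u ∈ Set.Icc a b,
          ‖r.eval u * icdf (P n) u - r.eval u * G u‖ ≤ M * δ := by
        intro u hu
        rw [← mul_sub, norm_mul]
        refine mul_le_mul (hM u hu) ?_ (norm_nonneg _) hM0
        rw [Real.norm_eq_abs]
        exact hdist u hu
      have hnorm := norm_setIntegral_le_of_norm_le_const (μ := volume)
        measure_Icc_lt_top hbnd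
      rw [measureReal_def, Real.volume_Icc, ENNReal.toReal_ofReal (by linarith)] at hnorm
      rw [Real.norm_eq_abs] at hnorm
      calc |∫ u in Set.Icc a b, (r.eval u * icdf (P n) u - r.eval u * G u)|
          ≤ M * δ * (b - a) := hnorm
      _ < ε := by
          have hne : M * (b - a) + 1 ≠ 0 := by nlinarith
          have hkey : (M * (b - a) + 1) * δ = ε := by
            rw [hδdef, mul_comm, div_mul_cancel₀ _ hne]
          nlinarith [hδpos]
    have hconv : Tendsto (fun n => p.eval b - p.derivative.eval b * icdf (P n) b
        + ∫ u in Set.Icc a b, r.eval u * icdf (P n) u) atTop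
        (𝓝 (p.eval b - p.derivative.eval b * G b
          + ∫ u in Set.Icc a b, r.eval u * G u)) :=
      (tendsto_const_nhds.sub ((hptw b).const_mul _)).add hthird
    rw [hformP]
    exact hconv.congr (fun n => (hform n).symm)
  -- conclusion
  refine ⟨Plim, hPlimProb, hsuppPlim, fun x => hGicdf x, ?_⟩
  intro f hf hfbdd
  rw [Metric.tendsto_atTop]
  intro ε hε
  obtain ⟨p, hp⟩ := exists_polynomial_near_of_continuousOn a b f hf.continuousOn (ε/4)
    (by linarith)
  have hest : ∀ (Q : Measure ℝ) [IsProbabilityMeasure Q], Q (Set.Icc a b)ᶜ = 0 →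
      |(∫ x, f x ∂Q) - ∫ x, p.eval x ∂Q| ≤ ε/4 := by
    intro Q hQ hQsupp
    rw [← integral_sub (integrableQ hQsupp hf) (integrableQ hQsupp p.continuous)]
    have hb1 : ∀ᵐ x ∂Q, ‖f x - p.eval x‖ ≤ (fun _ => ε/4) x := by
      filter_upwards [ae_mem_Icc hQsupp] with x hx
      rw [Real.norm_eq_abs, abs_sub_comm]
      exact (hp x hx).le
    have h := norm_integral_le_of_norm_le (integrable_const (ε/4)) hb1
    rw [integral_const, measureReal_def, measure_univ] at h
    simpa using h
  have hnear := hpoly p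
  rw [Metric.tendsto_atTop] at hnear
  obtain ⟨N, hN⟩ := hnear (ε/4) (by linarith)
  refine ⟨N, fun n hn => ?_⟩
  have h1 := hest (P n) (hPsupp n)
  have h2 := hest Plim hsuppPlim
  have h3 := hN n hn
  rw [Real.dist_eq] at h3 ⊢
  have t1 := abs_sub_le (∫ x, f x ∂(P n)) (∫ x, p.eval x ∂(P n)) (∫ x, f x ∂Plim)
  have t2 := abs_sub_le (∫ x, p.eval x ∂(P n)) (∫ x, p.eval x ∂Plim) (∫ x, f x ∂Plim)
  have h2' : |(∫ x, p.eval x ∂Plim) - ∫ x, f x ∂Plim| ≤ ε/4 := by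
    rw [abs_sub_comm]
    exact h2
  linarith
end

section
/- Suppose the discrete fragmentation coefficients satisfy k_{i,j} ≥ 0, k_{i,j} = 0 for i ≥ j, k_{i,j} = k_{j−i,j}, ∑_{i=1}^{j−1} k_{i,j} = 1, together with the strengthened assumption |∑_{i'≤i} (k_{i',j+1} − k_{i',j})| ≤ K/j and k_{i,j} ≤ K/j for all i, j, and suppose ε n₀(ε) → x₀ > 0. Define F^ε(x,y) = ∫₀^x k^ε(z,y) dz and G^ε(x,y) = ∫₀^x F^ε(z,y) dz for the step kernel k^ε. Then the families (F^ε) and (G^ε) are uniformly bounded on compact subsets of [0,∞) × [x₀, ∞), and there is a sequence ε_n → 0 along which F^{ε_n} and G^{ε_n} converge uniformly on every compact subset of [0,∞) × [x₀, ∞). -/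
open Filter MeasureTheory Topology

namespace RepartAux

variable {K x₀ : ℝ} {k : ℕ → ℕ → ℝ}

lemma k_zero (hk0 : ∀ i j, 0 ≤ k i j) (hkstrong2 : ∀ i j : ℕ, k i j ≤ K / j) (i : ℕ) :
    k i 0 = 0 :=
  le_antisymm (by simpa using hkstrong2 i 0) (hk0 i 0)

lemma k_one (hk0 : ∀ i j, 0 ≤ k i j) (hksupp : ∀ i j, j ≤ i → k i j = 0)
    (hkstrong1 : ∀ i j : ℕ,
      |∑ i' ∈ Finset.range (i + 1), (k i' (j + 1) - k i' j)| ≤ K / j)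
    (hkstrong2 : ∀ i j : ℕ, k i j ≤ K / j) (i : ℕ) : k i 1 = 0 := by
  rcases Nat.eq_zero_or_pos i with rfl | hi
  · have h := hkstrong1 0 0
    simp [k_zero hk0 hkstrong2] at h
    exact h
  · exact hksupp i 1 hi

/-- Uniform pointwise bound on the rescaled kernel. -/
lemma k_div_le (hK : 0 < K) (hx₀ : 0 < x₀) (hk0 : ∀ i j, 0 ≤ k i j)
    (hksupp : ∀ i j, j ≤ i → k i j = 0)
    (hkstrong1 : ∀ i j : ℕ,
      |∑ i' ∈ Finset.range (i + 1), (k i' (j + 1) - k i' j)| ≤ K / j)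
    (hkstrong2 : ∀ i j : ℕ, k i j ≤ K / j)
    {ε y : ℝ} (hε : 0 < ε) (hy : x₀ ≤ y) (i : ℕ) :
    k i ⌊y / ε⌋₊ / ε ≤ 2 * K / x₀ := by
  set j := ⌊y / ε⌋₊ with hj
  have hyp : 0 < y := lt_of_lt_of_le hx₀ hy
  match hj2 : j, hj.symm with
  | 0, _ => simp [k_zero hk0 hkstrong2]; positivity
  | 1, _ => simp [k_one hk0 hksupp hkstrong1 hkstrong2]; positivity
  | (n+2), hjeq =>
    have hjR : ((n:ℝ) + 2) ≤ y / ε := by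
      have := Nat.floor_le (by positivity : (0:ℝ) ≤ y / ε)
      rw [hjeq] at this; push_cast at this; linarith
    have hup : y / ε < (n:ℝ) + 2 + 1 := by
      have := Nat.lt_floor_add_one (y / ε)
      rw [hjeq] at this; push_cast at this; linarith
    have h2e : 2 * ε ≤ y := (le_div_iff₀ hε).mp (by linarith : (2:ℝ) ≤ y / ε)
    have hje : y / 2 < ((n:ℝ) + 2) * ε := by
      have h1 : y < ((n:ℝ) + 2 + 1) * ε := (div_lt_iff₀ hε).mp hup
      nlinarith
    have hpos : (0:ℝ) < (n:ℝ) + 2 := by positivity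
    have hb : k i (n+2) ≤ K / ((n:ℝ)+2) := by
      have := hkstrong2 i (n+2); push_cast at this; exact this
    have hbk : k i (n+2) * ((n:ℝ)+2) ≤ K := by rwa [← le_div_iff₀ hpos]
    rw [div_le_div_iff₀ hε (by positivity : (0:ℝ) < x₀)]
    nlinarith [mul_le_mul_of_nonneg_left (show x₀ ≤ 2*((((n:ℝ)+2))*ε) by linarith)
        (hk0 i (n+2)), mul_le_mul_of_nonneg_left hbk (le_of_lt hε)]

/-- The step kernel is interval integrable. -/
lemma f_intble (hk0 : ∀ i j, 0 ≤ k i j) (hkstrong2 : ∀ i j : ℕ, k i j ≤ K / j)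
    {ε : ℝ} (hε : 0 < ε) (j : ℕ) (a b : ℝ) :
    IntervalIntegrable (fun z => k ⌊z / ε⌋₊ j / ε) volume a b := by
  have hmeas : Measurable fun z : ℝ => k ⌊z / ε⌋₊ j / ε :=
    (measurable_from_top (f := fun i : ℕ => k i j / ε)).comp
      (Nat.measurable_floor.comp (measurable_id.div_const ε))
  refine (intervalIntegrable_const (c := K / (j:ℝ) / ε)).mono_fun
    hmeas.aestronglyMeasurable (Eventually.of_forall fun z => ?_)
  simp only [Real.norm_eq_abs]
  rw [abs_of_nonneg (div_nonneg (hk0 _ _) hε.le)]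
  have h1 : k ⌊z / ε⌋₊ j / ε ≤ K / (j:ℝ) / ε := by
    gcongr
    exact hkstrong2 _ _
  exact h1.trans (le_abs_self _)

/-- Integral over one mesh cell equals the coefficient. -/
lemma step_integral (hε : (0:ℝ) < ε) (i j : ℕ) (k : ℕ → ℕ → ℝ) :
    ∫ z in ((i:ℝ)*ε)..(((i:ℝ)+1)*ε), k ⌊z / ε⌋₊ j / ε = k i j := by
  have hle : (i:ℝ)*ε ≤ ((i:ℝ)+1)*ε := by nlinarith
  rw [intervalIntegral.integral_of_le hle, integral_Ioc_eq_integral_Ioo]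
  have hcong : ∀ z ∈ Set.Ioo ((i:ℝ)*ε) (((i:ℝ)+1)*ε),
      k ⌊z / ε⌋₊ j / ε = k i j / ε := by
    intro z hz
    have hz0 : (0:ℝ) ≤ z := le_trans (by positivity : (0:ℝ) ≤ (i:ℝ)*ε) hz.1.le
    have hfl : ⌊z / ε⌋₊ = i := by
      rw [Nat.floor_eq_iff (by positivity : (0:ℝ) ≤ z / ε)]
      constructor
      · exact le_of_lt ((lt_div_iff₀ hε).mpr (by linarith [hz.1]))
      · exact (div_lt_iff₀ hε).mpr (by push_cast; linarith [hz.2])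
    rw [hfl]
  rw [setIntegral_congr_fun measurableSet_Ioo hcong]
  rw [setIntegral_const, Real.volume_real_Ioo_of_le hle, smul_eq_mul]
  field_simp
  ring

/-- Integral up to a grid point is the partial sum. -/
lemma grid_integral (hk0 : ∀ i j, 0 ≤ k i j) (hkstrong2 : ∀ i j : ℕ, k i j ≤ K / j)
    {ε : ℝ} (hε : 0 < ε) (m j : ℕ) :
    ∫ z in (0:ℝ)..((m:ℝ)*ε), k ⌊z / ε⌋₊ j / ε = ∑ i ∈ Finset.range m, k i j := by
  have key := intervalIntegral.sum_integral_adjacent_intervals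
    (a := fun i : ℕ => (i:ℝ)*ε) (n := m) (μ := volume)
    (f := fun z => k ⌊z / ε⌋₊ j / ε)
    (fun i _ => f_intble hk0 hkstrong2 hε j _ _)
  simp only [Nat.cast_zero, zero_mul] at key
  rw [← key]
  refine Finset.sum_congr rfl fun i _ => ?_
  have := step_integral hε i j k
  push_cast at this ⊢
  convert this using 2

/-- x-Lipschitz estimate for F. -/
lemma F_diff_x (hK : 0 < K) (hx₀ : 0 < x₀) (hk0 : ∀ i j, 0 ≤ k i j)
    (hksupp : ∀ i j, j ≤ i → k i j = 0)
    (hkstrong1 : ∀ i j : ℕ,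
      |∑ i' ∈ Finset.range (i + 1), (k i' (j + 1) - k i' j)| ≤ K / j)
    (hkstrong2 : ∀ i j : ℕ, k i j ≤ K / j)
    {ε y : ℝ} (hε : 0 < ε) (hy : x₀ ≤ y) (x x' : ℝ) :
    |(∫ z in (0:ℝ)..x, k ⌊z / ε⌋₊ ⌊y / ε⌋₊ / ε) -
      ∫ z in (0:ℝ)..x', k ⌊z / ε⌋₊ ⌊y / ε⌋₊ / ε| ≤ 2 * K / x₀ * |x - x'| := by
  rw [intervalIntegral.integral_interval_sub_left (f_intble hk0 hkstrong2 hε _ _ _)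
    (f_intble hk0 hkstrong2 hε _ _ _)]
  have := intervalIntegral.norm_integral_le_of_norm_le_const
    (C := 2 * K / x₀) (f := fun z => k ⌊z / ε⌋₊ ⌊y / ε⌋₊ / ε) (a := x') (b := x)
    (fun z _ => by
      rw [Real.norm_eq_abs, abs_of_nonneg (div_nonneg (hk0 _ _) hε.le)]
      exact k_div_le hK hx₀ hk0 hksupp hkstrong1 hkstrong2 hε hy _)
  rw [Real.norm_eq_abs] at this
  calc _ ≤ 2 * K / x₀ * |x - x'| := this

/-- bound for F. -/
lemma F_bound (hK : 0 < K) (hx₀ : 0 < x₀) (hk0 : ∀ i j, 0 ≤ k i j)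
    (hksupp : ∀ i j, j ≤ i → k i j = 0)
    (hkstrong1 : ∀ i j : ℕ,
      |∑ i' ∈ Finset.range (i + 1), (k i' (j + 1) - k i' j)| ≤ K / j)
    (hkstrong2 : ∀ i j : ℕ, k i j ≤ K / j)
    {ε y : ℝ} (hε : 0 < ε) (hy : x₀ ≤ y) (x : ℝ) :
    |∫ z in (0:ℝ)..x, k ⌊z / ε⌋₊ ⌊y / ε⌋₊ / ε| ≤ 2 * K / x₀ * |x| := by
  have := F_diff_x hK hx₀ hk0 hksupp hkstrong1 hkstrong2 hε hy x 0
  simpa using this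

/-- telescoping estimate for partial sums in the second index. -/
lemma sum_k_diff (hK : 0 < K)
    (hkstrong1 : ∀ i j : ℕ,
      |∑ i' ∈ Finset.range (i + 1), (k i' (j + 1) - k i' j)| ≤ K / j)
    (m : ℕ) {j j' : ℕ} (h1 : 1 ≤ j') (hjj : j' ≤ j) :
    |∑ i ∈ Finset.range m, k i j - ∑ i ∈ Finset.range m, k i j'| ≤
      ((j : ℝ) - j') * (K / j') := by
  set g : ℕ → ℝ := fun l => ∑ i ∈ Finset.range m, k i l with hg
  have hD : ∀ l : ℕ, 1 ≤ l → |g (l+1) - g l| ≤ K / l := by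
    intro l hl
    rcases Nat.eq_zero_or_pos m with rfl | hm
    · simp [hg]
      positivity
    · have : g (l+1) - g l = ∑ i ∈ Finset.range ((m-1)+1), (k i (l+1) - k i l) := by
        rw [show m - 1 + 1 = m by omega, hg]
        simp [Finset.sum_sub_distrib]
      rw [this]
      exact hkstrong1 (m-1) l
  have tel : ∀ b, j' ≤ b → g b - g j' = ∑ l ∈ Finset.Ico j' b, (g (l+1) - g l) := by
    intro b hb
    induction b, hb using Nat.le_induction with
    | base => simp
    | succ b hb ih =>
      rw [Finset.sum_Ico_succ_top (by omega), ← ih]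
      ring
  rw [show (∑ i ∈ Finset.range m, k i j - ∑ i ∈ Finset.range m, k i j') = g j - g j'
    from rfl, tel j hjj]
  calc |∑ l ∈ Finset.Ico j' j, (g (l+1) - g l)|
      ≤ ∑ l ∈ Finset.Ico j' j, |g (l+1) - g l| := Finset.abs_sum_le_sum_abs _ _
    _ ≤ ∑ l ∈ Finset.Ico j' j, (K / j') := by
        refine Finset.sum_le_sum fun l hl => ?_
        have hl1 : 1 ≤ l := le_trans h1 (Finset.mem_Ico.mp hl).1
        refine (hD l hl1).trans ?_
        have h1l : (0:ℝ) < j' := by exact_mod_cast h1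
        have h2l : (j':ℝ) ≤ l := by exact_mod_cast (Finset.mem_Ico.mp hl).1
        gcongr
    _ = ((j - j' : ℕ) : ℝ) * (K / j') := by
        rw [Finset.sum_const, Nat.card_Ico]
        simp [nsmul_eq_mul]
    _ = ((j:ℝ) - j') * (K / j') := by
        rw [Nat.cast_sub hjj]

set_option maxHeartbeats 1000000 in
/-- y-continuity estimate for F (ordered version). -/
lemma F_diff_y_le (hK : 0 < K) (hx₀ : 0 < x₀) (hk0 : ∀ i j, 0 ≤ k i j)
    (hksupp : ∀ i j, j ≤ i → k i j = 0)
    (hkstrong1 : ∀ i j : ℕ,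
      |∑ i' ∈ Finset.range (i + 1), (k i' (j + 1) - k i' j)| ≤ K / j)
    (hkstrong2 : ∀ i j : ℕ, k i j ≤ K / j)
    {ε x y y' : ℝ} (hε : 0 < ε) (hε2 : ε ≤ x₀ / 2) (hx : 0 ≤ x)
    (hy : x₀ ≤ y) (hy' : x₀ ≤ y') (hle : y' ≤ y) :
    |(∫ z in (0:ℝ)..x, k ⌊z / ε⌋₊ ⌊y / ε⌋₊ / ε) -
      ∫ z in (0:ℝ)..x, k ⌊z / ε⌋₊ ⌊y' / ε⌋₊ / ε| ≤
      2 * K / x₀ * (y - y') + 8 * (K / x₀) * ε := by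
  have hy0 : (0:ℝ) < y := lt_of_lt_of_le hx₀ hy
  have hy'0 : (0:ℝ) < y' := lt_of_lt_of_le hx₀ hy'
  set m := ⌊x / ε⌋₊ with hm
  have hmε : (m:ℝ) * ε ≤ x := by
    have := Nat.floor_le (div_nonneg hx hε.le)
    calc (m:ℝ) * ε ≤ (x / ε) * ε := by gcongr
      _ = x := by field_simp
  have hxm : x - (m:ℝ) * ε ≤ ε := by
    have := Nat.lt_floor_add_one (x / ε)
    have hx2 : x < ((m:ℝ) + 1) * ε := by
      calc x = (x / ε) * ε := by field_simp
        _ < ((m:ℝ) + 1) * ε := by gcongr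
    nlinarith
  have tail : ∀ Y : ℝ, x₀ ≤ Y →
      |(∫ z in (0:ℝ)..x, k ⌊z / ε⌋₊ ⌊Y / ε⌋₊ / ε) -
        ∑ i ∈ Finset.range m, k i ⌊Y / ε⌋₊| ≤ 2 * K / x₀ * ε := by
    intro Y hY
    have h := F_diff_x hK hx₀ hk0 hksupp hkstrong1 hkstrong2 hε hY x ((m:ℝ) * ε)
    rw [grid_integral hk0 hkstrong2 hε m ⌊Y / ε⌋₊] at h
    refine h.trans ?_
    rw [abs_of_nonneg (by linarith)]
    have : (0:ℝ) ≤ 2 * K / x₀ := by positivity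
    nlinarith
  set j := ⌊y / ε⌋₊ with hj
  set j' := ⌊y' / ε⌋₊ with hj'
  have hjj : j' ≤ j := Nat.floor_le_floor (by gcongr)
  have h1j' : 1 ≤ j' := by
    rw [hj', Nat.le_floor_iff (div_nonneg hy'0.le hε.le)]
    rw [le_div_iff₀ hε]
    push_cast; linarith
  have hmid := sum_k_diff hK hkstrong1 m h1j' hjj
  have hjle : (j:ℝ) ≤ y / ε := Nat.floor_le (div_nonneg hy0.le hε.le)
  have hj'gt : y' / ε < (j':ℝ) + 1 := Nat.lt_floor_add_one _
  have hj'pos : (0:ℝ) < (j':ℝ) := by exact_mod_cast h1j'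
  have bound1 : (j:ℝ) - j' ≤ (y - y') / ε + 1 := by
    have hsub : y / ε - y' / ε = (y - y') / ε := by ring
    linarith
  have hj'e : x₀ / 2 < (j':ℝ) * ε := by
    have h3 : y' < ((j':ℝ) + 1) * ε := by
      calc y' = (y' / ε) * ε := by field_simp
        _ < ((j':ℝ) + 1) * ε := by gcongr
    nlinarith
  have bound2 : K / (j':ℝ) ≤ 2 * K * ε / x₀ := by
    rw [div_le_div_iff₀ hj'pos hx₀]
    nlinarith
  have hprod : ((j:ℝ) - j') * (K / j') ≤ ((y - y') / ε + 1) * (2 * K * ε / x₀) := by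
    have h0 : (0:ℝ) ≤ (j:ℝ) - j' := by
      have : (j':ℝ) ≤ j := by exact_mod_cast hjj
      linarith
    have h4 : (0:ℝ) ≤ K / (j':ℝ) := by positivity
    exact mul_le_mul bound1 bound2 h4 (by nlinarith [bound1])
  have heq : ((y - y') / ε + 1) * (2 * K * ε / x₀) =
      2 * K / x₀ * (y - y') + 2 * K * ε / x₀ := by
    field_simp
  have htri : |(∫ z in (0:ℝ)..x, k ⌊z / ε⌋₊ j / ε) -
      ∫ z in (0:ℝ)..x, k ⌊z / ε⌋₊ j' / ε| ≤
      2 * K / x₀ * ε + ((j:ℝ) - j') * (K / j') + 2 * K / x₀ * ε := by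
    have t1 := tail y hy
    have t2 := tail y' hy'
    rw [← hj] at t1
    rw [← hj'] at t2
    calc |(∫ z in (0:ℝ)..x, k ⌊z / ε⌋₊ j / ε) - ∫ z in (0:ℝ)..x, k ⌊z / ε⌋₊ j' / ε|
        ≤ |(∫ z in (0:ℝ)..x, k ⌊z / ε⌋₊ j / ε) - ∑ i ∈ Finset.range m, k i j| +
          |∑ i ∈ Finset.range m, k i j - ∑ i ∈ Finset.range m, k i j'| +
          |(∑ i ∈ Finset.range m, k i j') - ∫ z in (0:ℝ)..x, k ⌊z / ε⌋₊ j' / ε| := by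
          calc |(∫ z in (0:ℝ)..x, k ⌊z / ε⌋₊ j / ε) -
                ∫ z in (0:ℝ)..x, k ⌊z / ε⌋₊ j' / ε|
              ≤ |(∫ z in (0:ℝ)..x, k ⌊z / ε⌋₊ j / ε) - ∑ i ∈ Finset.range m, k i j| +
                |(∑ i ∈ Finset.range m, k i j) -
                  ∫ z in (0:ℝ)..x, k ⌊z / ε⌋₊ j' / ε| :=
                abs_sub_le _ _ _
            _ ≤ _ := by
                have h5 := abs_sub_le (∑ i ∈ Finset.range m, k i j)
                  (∑ i ∈ Finset.range m, k i j')
                  (∫ z in (0:ℝ)..x, k ⌊z / ε⌋₊ j' / ε)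
                linarith
      _ ≤ 2 * K / x₀ * ε + ((j:ℝ) - j') * (K / j') + 2 * K / x₀ * ε := by
          rw [abs_sub_comm] at t2
          exact add_le_add (add_le_add t1 hmid) t2
  refine htri.trans ?_
  have hKx : (0:ℝ) ≤ K / x₀ * ε := by positivity
  have h6 : ((j:ℝ) - j') * (K / j') ≤ 2 * K / x₀ * (y - y') + 2 * K * ε / x₀ :=
    heq ▸ hprod
  have h7 : 2 * K * ε / x₀ = 2 * (K / x₀ * ε) := by ring
  have h8 : 2 * K / x₀ * ε = 2 * (K / x₀ * ε) := by ring
  have h9 : 8 * (K / x₀) * ε = 8 * (K / x₀ * ε) := by ring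
  linarith

/-- y-continuity estimate for F. -/
lemma F_diff_y (hK : 0 < K) (hx₀ : 0 < x₀) (hk0 : ∀ i j, 0 ≤ k i j)
    (hksupp : ∀ i j, j ≤ i → k i j = 0)
    (hkstrong1 : ∀ i j : ℕ,
      |∑ i' ∈ Finset.range (i + 1), (k i' (j + 1) - k i' j)| ≤ K / j)
    (hkstrong2 : ∀ i j : ℕ, k i j ≤ K / j)
    {ε x y y' : ℝ} (hε : 0 < ε) (hε2 : ε ≤ x₀ / 2) (hx : 0 ≤ x)
    (hy : x₀ ≤ y) (hy' : x₀ ≤ y') :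
    |(∫ z in (0:ℝ)..x, k ⌊z / ε⌋₊ ⌊y / ε⌋₊ / ε) -
      ∫ z in (0:ℝ)..x, k ⌊z / ε⌋₊ ⌊y' / ε⌋₊ / ε| ≤
      2 * K / x₀ * |y - y'| + 8 * (K / x₀) * ε := by
  rcases le_total y' y with h | h
  · rw [abs_of_nonneg (by linarith : (0:ℝ) ≤ y - y')]
    exact F_diff_y_le hK hx₀ hk0 hksupp hkstrong1 hkstrong2 hε hε2 hx hy hy' h
  · have habs : |y - y'| = y' - y := by
      rw [abs_sub_comm]; exact abs_of_nonneg (by linarith)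
    rw [abs_sub_comm, habs]
    exact F_diff_y_le hK hx₀ hk0 hksupp hkstrong1 hkstrong2 hε hε2 hx hy' hy h

/-- The primitive F is interval integrable (being continuous). -/
lemma Fe_intble (hk0 : ∀ i j, 0 ≤ k i j) (hkstrong2 : ∀ i j : ℕ, k i j ≤ K / j)
    {ε : ℝ} (hε : 0 < ε) (j : ℕ) (a b : ℝ) :
    IntervalIntegrable (fun z => ∫ w in (0:ℝ)..z, k ⌊w / ε⌋₊ j / ε) volume a b :=
  ((intervalIntegral.continuous_primitive
    (fun a b => f_intble hk0 hkstrong2 hε j a b) 0).intervalIntegrable a b)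

/-- x-Lipschitz estimate for G. -/
lemma G_diff_x (hK : 0 < K) (hx₀ : 0 < x₀) (hk0 : ∀ i j, 0 ≤ k i j)
    (hksupp : ∀ i j, j ≤ i → k i j = 0)
    (hkstrong1 : ∀ i j : ℕ,
      |∑ i' ∈ Finset.range (i + 1), (k i' (j + 1) - k i' j)| ≤ K / j)
    (hkstrong2 : ∀ i j : ℕ, k i j ≤ K / j)
    {ε y : ℝ} (hε : 0 < ε) (hy : x₀ ≤ y) {x x' R' : ℝ}
    (hx : |x| ≤ R') (hx' : |x'| ≤ R') :
    |(∫ z in (0:ℝ)..x, ∫ w in (0:ℝ)..z, k ⌊w / ε⌋₊ ⌊y / ε⌋₊ / ε) -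
      ∫ z in (0:ℝ)..x', ∫ w in (0:ℝ)..z, k ⌊w / ε⌋₊ ⌊y / ε⌋₊ / ε| ≤
      2 * K / x₀ * R' * |x - x'| := by
  rw [intervalIntegral.integral_interval_sub_left (Fe_intble hk0 hkstrong2 hε _ _ _)
    (Fe_intble hk0 hkstrong2 hε _ _ _)]
  have key := intervalIntegral.norm_integral_le_of_norm_le_const
    (C := 2 * K / x₀ * R')
    (f := fun z => ∫ w in (0:ℝ)..z, k ⌊w / ε⌋₊ ⌊y / ε⌋₊ / ε) (a := x') (b := x)
    (fun z hz => by
      rw [Real.norm_eq_abs]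
      have hzR : |z| ≤ R' := by
        have h1 := abs_le.mp hx
        have h2 := abs_le.mp hx'
        rw [Set.mem_uIoc] at hz
        rcases hz with hz | hz <;>
          exact abs_le.mpr ⟨by linarith [hz.1, hz.2], by linarith [hz.1, hz.2]⟩
      calc |∫ w in (0:ℝ)..z, k ⌊w / ε⌋₊ ⌊y / ε⌋₊ / ε| ≤ 2 * K / x₀ * |z| :=
            F_bound hK hx₀ hk0 hksupp hkstrong1 hkstrong2 hε hy z
        _ ≤ 2 * K / x₀ * R' := by
            have : (0:ℝ) ≤ 2 * K / x₀ := by positivity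
            nlinarith)
  rw [Real.norm_eq_abs] at key
  exact key

/-- Bound for G. -/
lemma G_bound (hK : 0 < K) (hx₀ : 0 < x₀) (hk0 : ∀ i j, 0 ≤ k i j)
    (hksupp : ∀ i j, j ≤ i → k i j = 0)
    (hkstrong1 : ∀ i j : ℕ,
      |∑ i' ∈ Finset.range (i + 1), (k i' (j + 1) - k i' j)| ≤ K / j)
    (hkstrong2 : ∀ i j : ℕ, k i j ≤ K / j)
    {ε y : ℝ} (hε : 0 < ε) (hy : x₀ ≤ y) {x R' : ℝ} (hx : |x| ≤ R') (hR' : 0 ≤ R') :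
    |∫ z in (0:ℝ)..x, ∫ w in (0:ℝ)..z, k ⌊w / ε⌋₊ ⌊y / ε⌋₊ / ε| ≤
      2 * K / x₀ * R' * R' := by
  have := G_diff_x hK hx₀ hk0 hksupp hkstrong1 hkstrong2 hε hy hx
    (by simpa using hR' : |(0:ℝ)| ≤ R')
  simp only [intervalIntegral.integral_same, sub_zero] at this
  refine this.trans ?_
  have h0 : (0:ℝ) ≤ 2 * K / x₀ * R' := by positivity
  nlinarith [abs_le.mp hx]

/-- y-continuity estimate for G. -/
lemma G_diff_y (hK : 0 < K) (hx₀ : 0 < x₀) (hk0 : ∀ i j, 0 ≤ k i j)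
    (hksupp : ∀ i j, j ≤ i → k i j = 0)
    (hkstrong1 : ∀ i j : ℕ,
      |∑ i' ∈ Finset.range (i + 1), (k i' (j + 1) - k i' j)| ≤ K / j)
    (hkstrong2 : ∀ i j : ℕ, k i j ≤ K / j)
    {ε x y y' : ℝ} (hε : 0 < ε) (hε2 : ε ≤ x₀ / 2) (hx : 0 ≤ x)
    (hy : x₀ ≤ y) (hy' : x₀ ≤ y') :
    |(∫ z in (0:ℝ)..x, ∫ w in (0:ℝ)..z, k ⌊w / ε⌋₊ ⌊y / ε⌋₊ / ε) -
      ∫ z in (0:ℝ)..x, ∫ w in (0:ℝ)..z, k ⌊w / ε⌋₊ ⌊y' / ε⌋₊ / ε| ≤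
      (2 * K / x₀ * |y - y'| + 8 * (K / x₀) * ε) * x := by
  rw [← intervalIntegral.integral_sub (Fe_intble hk0 hkstrong2 hε _ _ _)
    (Fe_intble hk0 hkstrong2 hε _ _ _)]
  have key := intervalIntegral.norm_integral_le_of_norm_le_const
    (C := 2 * K / x₀ * |y - y'| + 8 * (K / x₀) * ε)
    (f := fun z => (∫ w in (0:ℝ)..z, k ⌊w / ε⌋₊ ⌊y / ε⌋₊ / ε) -
      ∫ w in (0:ℝ)..z, k ⌊w / ε⌋₊ ⌊y' / ε⌋₊ / ε) (a := 0) (b := x)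
    (fun z hz => by
      rw [Real.norm_eq_abs]
      have hz0 : 0 ≤ z := by
        rw [Set.mem_uIoc] at hz
        rcases hz with hz | hz
        · exact hz.1.le
        · linarith [hz.1, hz.2]
      exact F_diff_y hK hx₀ hk0 hksupp hkstrong1 hkstrong2 hε hε2 hz0 hy hy')
  rw [Real.norm_eq_abs] at key
  refine key.trans ?_
  rw [sub_zero, abs_of_nonneg hx]

/-- A countable approximating family in the strip. -/
lemma exists_dense_seq (x₀ : ℝ) : ∃ d : ℕ → ℝ × ℝ,
    (∀ n, 0 ≤ (d n).1 ∧ x₀ ≤ (d n).2) ∧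
    ∀ p : ℝ × ℝ, 0 ≤ p.1 → x₀ ≤ p.2 → ∀ r : ℝ, 0 < r → ∃ n, dist (d n) p < r := by
  obtain ⟨e⟩ : Nonempty (ℕ ≃ ℚ × ℚ) := ⟨(Denumerable.eqv (ℚ × ℚ)).symm⟩
  refine ⟨fun n => (max ((e n).1 : ℝ) 0, max ((e n).2 : ℝ) x₀),
    fun n => ⟨le_max_right _ _, le_max_right _ _⟩, ?_⟩
  intro p hp1 hp2 r hr
  obtain ⟨q1, hq1⟩ := exists_rat_near p.1 hr
  obtain ⟨q2, hq2⟩ := exists_rat_near p.2 hr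
  refine ⟨e.symm (q1, q2), ?_⟩
  rw [Prod.dist_eq]
  have h1 : dist (max ((q1:ℝ)) 0) p.1 < r := by
    rw [Real.dist_eq]
    calc |max ((q1:ℝ)) 0 - p.1| = |max ((q1:ℝ)) 0 - max p.1 0| := by
          rw [max_eq_left hp1]
      _ ≤ |(q1:ℝ) - p.1| := abs_max_sub_max_le_abs _ _ _
      _ < r := by rw [abs_sub_comm]; exact hq1
  have h2 : dist (max ((q2:ℝ)) x₀) p.2 < r := by
    rw [Real.dist_eq]
    have hp2' : max p.2 x₀ = p.2 := max_eq_left hp2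
    calc |max ((q2:ℝ)) x₀ - p.2| = |max ((q2:ℝ)) x₀ - max p.2 x₀| := by rw [hp2']
      _ ≤ |(q2:ℝ) - p.2| := abs_max_sub_max_le_abs _ _ _
      _ < r := by rw [abs_sub_comm]; exact hq2
  simp only [Equiv.apply_symm_apply]
  exact max_lt h1 h2

/-- Abstract uniform-Cauchy criterion from an asymptotic modulus of continuity and
pointwise convergence on a dense family. -/
lemma uniformCauchy_of_modulus {H : ℕ → ℝ × ℝ → ℝ} {Kc : Set (ℝ × ℝ)} {d : ℕ → ℝ × ℝ}
    (hKc : IsCompact Kc)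
    {C : ℝ} (hC : 0 ≤ C) {δ : ℕ → ℝ} (hδ : Tendsto δ atTop (𝓝 0))
    (hdense : ∀ p ∈ Kc, ∀ r : ℝ, 0 < r → ∃ n, dist (d n) p < r)
    (hmod : ∀ m : ℕ, ∀ p ∈ Kc, ∀ n : ℕ, dist (d n) p ≤ 1 →
      |H m p - H m (d n)| ≤ C * dist (d n) p + δ m)
    (hconv : ∀ n : ℕ, ∃ l : ℝ, Tendsto (fun m => H m (d n)) atTop (𝓝 l)) :
    UniformCauchySeqOn H atTop Kc := by
  rw [Metric.uniformCauchySeqOn_iff]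
  intro r hr
  set ρ := min 1 (r / (8 * (C + 1))) with hρ
  have hρ0 : 0 < ρ := lt_min one_pos (by positivity)
  have hρ1 : ρ ≤ 1 := min_le_left _ _
  have hCρ : C * ρ ≤ r / 8 := by
    have h1 : ρ ≤ r / (8 * (C + 1)) := min_le_right _ _
    have h2 : C * (r / (8 * (C + 1))) = r / 8 * (C / (C + 1)) := by
      field_simp
    have h3 : C / (C + 1) ≤ 1 := by
      rw [div_le_one (by positivity)]; linarith
    calc C * ρ ≤ C * (r / (8 * (C + 1))) := by gcongr
      _ = r / 8 * (C / (C + 1)) := h2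
      _ ≤ r / 8 * 1 := by gcongr
      _ = r / 8 := mul_one _
  have hcov : Kc ⊆ ⋃ n : ℕ, Metric.ball (d n) ρ := by
    intro p hp
    obtain ⟨n, hn⟩ := hdense p hp ρ hρ0
    exact Set.mem_iUnion.mpr ⟨n, by simpa [Metric.mem_ball, dist_comm] using hn⟩
  obtain ⟨t, ht⟩ := hKc.elim_finite_subcover (fun n => Metric.ball (d n) ρ)
    (fun n => Metric.isOpen_ball) hcov
  have hc : ∀ n : ℕ, ∃ N : ℕ, ∀ a ≥ N, ∀ b ≥ N, |H a (d n) - H b (d n)| < r / 4 := by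
    intro n
    obtain ⟨l, hl⟩ := hconv n
    have hcs := hl.cauchySeq
    rw [Metric.cauchySeq_iff] at hcs
    obtain ⟨N, hN⟩ := hcs (r / 4) (by positivity)
    exact ⟨N, fun a ha b hb => by simpa [Real.dist_eq] using hN a ha b hb⟩
  choose Nf hNf using hc
  obtain ⟨N0, hN0⟩ : ∃ N0 : ℕ, ∀ m ≥ N0, δ m < r / 8 := by
    obtain ⟨N0, hN0⟩ := (Metric.tendsto_atTop.mp hδ) (r / 8) (by positivity)
    exact ⟨N0, fun m hm => by
      have := hN0 m hm
      rw [Real.dist_eq, sub_zero] at this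
      exact lt_of_le_of_lt (le_abs_self _) this⟩
  refine ⟨max (t.sup Nf) N0, fun a ha b hb p hp => ?_⟩
  obtain ⟨n, hnt, hpn⟩ := Set.mem_iUnion₂.mp (ht hp)
  have hdist : dist (d n) p < ρ := by
    rw [dist_comm]; exact Metric.mem_ball.mp hpn
  have hma := hmod a p hp n (le_trans hdist.le hρ1)
  have hmb := hmod b p hp n (le_trans hdist.le hρ1)
  have hNle : Nf n ≤ max (t.sup Nf) N0 := le_trans (Finset.le_sup hnt) (le_max_left _ _)
  have hmid := hNf n a (le_trans hNle ha) b (le_trans hNle hb)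
  have hδa := hN0 a (le_trans (le_max_right _ _) ha)
  have hδb := hN0 b (le_trans (le_max_right _ _) hb)
  have hCd : C * dist (d n) p ≤ C * ρ := mul_le_mul_of_nonneg_left hdist.le hC
  rw [Real.dist_eq]
  have htri : |H a p - H b p| ≤ |H a p - H a (d n)| + |H a (d n) - H b (d n)| +
      |H b (d n) - H b p| := by
    calc |H a p - H b p| ≤ |H a p - H a (d n)| + |H a (d n) - H b p| := abs_sub_le _ _ _
      _ ≤ |H a p - H a (d n)| + (|H a (d n) - H b (d n)| + |H b (d n) - H b p|) := by
          linarith [abs_sub_le (H a (d n)) (H b (d n)) (H b p)]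
      _ = _ := by ring
  have hb' : |H b (d n) - H b p| = |H b p - H b (d n)| := abs_sub_comm _ _
  rw [hb'] at htri
  linarith

end RepartAux

set_option maxHeartbeats 3000000 in
open RepartAux in
/-- Lemma A.7: under the structural assumptions on the fragmentation
coefficients together with the strengthened assumption
`|∑_{i' ≤ i}(k_{i',j+1} - k_{i',j})| ≤ K/j`, `k_{i,j} ≤ K/j`, and `ε n₀(ε) → x₀ > 0`,
the repartition functions `F^ε(x,y) = ∫₀^x k^ε(z,y) dz` and their primitives
`G^ε(x,y) = ∫₀^x F^ε(z,y) dz` of the rescaled step kernels are uniformly bounded on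
compact subsets of `[0,∞) × [x₀,∞)` and converge, along a subsequence `ε_n → 0`,
uniformly on every such compact set. -/
theorem repartition_function_compactness (K x₀ : ℝ) (hK : 0 < K) (hx₀ : 0 < x₀)
    (k : ℕ → ℕ → ℝ) (n₀ : ℝ → ℕ) (hn₀ : ∀ ε : ℝ, 0 < ε → 2 ≤ n₀ ε)
    (hk0 : ∀ i j, 0 ≤ k i j)
    (hksupp : ∀ i j, j ≤ i → k i j = 0)
    (hksymm : ∀ i j, 1 ≤ i → i ≤ j - 1 → k i j = k (j - i) j)
    (hknorm : ∀ j, 2 ≤ j → ∑ i ∈ Finset.Ico 1 j, k i j = 1)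
    (hkstrong1 : ∀ i j : ℕ,
      |∑ i' ∈ Finset.range (i + 1), (k i' (j + 1) - k i' j)| ≤ K / j)
    (hkstrong2 : ∀ i j : ℕ, k i j ≤ K / j)
    (hx₀lim : Tendsto (fun ε : ℝ => ε * (n₀ ε : ℝ)) (nhdsWithin 0 (Set.Ioi 0)) (𝓝 x₀)) :
    (∀ R : ℝ, 0 < R → ∃ B : ℝ, ∀ ε : ℝ, 0 < ε →
      ∀ x ∈ Set.Icc (0:ℝ) R, ∀ y ∈ Set.Icc x₀ R,
        |∫ z in (0:ℝ)..x, k ⌊z / ε⌋₊ ⌊y / ε⌋₊ / ε| ≤ B ∧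
        |∫ z in (0:ℝ)..x, ∫ w in (0:ℝ)..z, k ⌊w / ε⌋₊ ⌊y / ε⌋₊ / ε| ≤ B) ∧
    ∃ (εseq : ℕ → ℝ) (F G : ℝ → ℝ → ℝ),
      (∀ n, 0 < εseq n) ∧ Tendsto εseq atTop (𝓝 0) ∧
      ∀ R : ℝ, 0 < R →
        TendstoUniformlyOn
          (fun n p => ∫ z in (0:ℝ)..p.1, k ⌊z / εseq n⌋₊ ⌊p.2 / εseq n⌋₊ / εseq n)
          (fun p : ℝ × ℝ => F p.1 p.2) atTop (Set.Icc 0 R ×ˢ Set.Icc x₀ R) ∧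
        TendstoUniformlyOn
          (fun n p => ∫ z in (0:ℝ)..p.1,
            ∫ w in (0:ℝ)..z, k ⌊w / εseq n⌋₊ ⌊p.2 / εseq n⌋₊ / εseq n)
          (fun p : ℝ × ℝ => G p.1 p.2) atTop (Set.Icc 0 R ×ˢ Set.Icc x₀ R) := by
  classical
  constructor
  · -- uniform boundedness
    intro R hR
    refine ⟨2 * K / x₀ * R + 2 * K / x₀ * R * R, fun ε hε x hx y hy => ?_⟩
    have hxabs : |x| ≤ R := by rw [abs_of_nonneg hx.1]; exact hx.2
    have hc0 : (0:ℝ) ≤ 2 * K / x₀ := by positivity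
    constructor
    · have hFb := F_bound hK hx₀ hk0 hksupp hkstrong1 hkstrong2 hε hy.1 x
      refine hFb.trans ?_
      linarith [mul_le_mul_of_nonneg_left hxabs hc0,
        mul_nonneg (mul_nonneg hc0 hR.le) hR.le]
    · have hGb := G_bound hK hx₀ hk0 hksupp hkstrong1 hkstrong2 hε hy.1 hxabs hR.le
      refine hGb.trans ?_
      linarith [mul_nonneg hc0 hR.le, mul_le_mul_of_nonneg_left hxabs hc0,
        mul_nonneg (mul_nonneg hc0 hR.le) hR.le]
  · -- compactness part
    obtain ⟨d, hdS, hdense⟩ := exists_dense_seq x₀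
    set ε' : ℕ → ℝ := fun m => x₀ / (2 * ((m:ℝ) + 1)) with hε'
    have hε'pos : ∀ m, 0 < ε' m := fun m => by positivity
    have hε'le : ∀ m, ε' m ≤ x₀ / 2 := by
      intro m
      rw [hε', div_le_div_iff₀ (by positivity) (by norm_num)]
      nlinarith [hx₀.le, Nat.cast_nonneg (α := ℝ) m]
    have hε'tend : Tendsto ε' atTop (𝓝 0) := by
      apply Tendsto.div_atTop (tendsto_const_nhds (x := x₀))
      apply Tendsto.const_mul_atTop (by norm_num : (0:ℝ) < 2)
      exact tendsto_natCast_atTop_atTop.atTop_add tendsto_const_nhds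
    set u : ℕ → ℕ → ℝ × ℝ := fun m n =>
      ((∫ z in (0:ℝ)..(d n).1, k ⌊z / ε' m⌋₊ ⌊(d n).2 / ε' m⌋₊ / ε' m),
       (∫ z in (0:ℝ)..(d n).1,
          ∫ w in (0:ℝ)..z, k ⌊w / ε' m⌋₊ ⌊(d n).2 / ε' m⌋₊ / ε' m)) with hu
    have humem : ∀ m, u m ∈ Set.pi Set.univ (fun n =>
        Set.Icc (-(2 * K / x₀ * |(d n).1|)) (2 * K / x₀ * |(d n).1|) ×ˢ
        Set.Icc (-(2 * K / x₀ * |(d n).1| * |(d n).1|))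
          (2 * K / x₀ * |(d n).1| * |(d n).1|)) := by
      intro m
      rw [Set.mem_univ_pi]
      intro n
      constructor
      · exact Set.mem_Icc.mpr (abs_le.mp
          (F_bound hK hx₀ hk0 hksupp hkstrong1 hkstrong2 (hε'pos m) (hdS n).2 _))
      · exact Set.mem_Icc.mpr (abs_le.mp
          (G_bound hK hx₀ hk0 hksupp hkstrong1 hkstrong2 (hε'pos m) (hdS n).2
            (le_refl _) (abs_nonneg _)))
    have hcomp : IsCompact (Set.pi Set.univ (fun n : ℕ =>
        Set.Icc (-(2 * K / x₀ * |(d n).1|)) (2 * K / x₀ * |(d n).1|) ×ˢ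
        Set.Icc (-(2 * K / x₀ * |(d n).1| * |(d n).1|))
          (2 * K / x₀ * |(d n).1| * |(d n).1|))) :=
      isCompact_univ_pi fun n => isCompact_Icc.prod isCompact_Icc
    obtain ⟨v, hv, φ, hφ, hlim⟩ := hcomp.tendsto_subseq humem
    set εs : ℕ → ℝ := fun m => ε' (φ m) with hεs
    have hεspos : ∀ m, 0 < εs m := fun m => hε'pos _
    have hεsle : ∀ m, εs m ≤ x₀ / 2 := fun m => hε'le _
    have hεstend : Tendsto εs atTop (𝓝 0) := by
      refine squeeze_zero (fun m => (hεspos m).le) (fun m => ?_) hε'tend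
      rw [hεs, hε']
      have hmφ : ((m:ℝ) + 1) ≤ ((φ m : ℕ):ℝ) + 1 := by
        have h9 : m ≤ φ m := hφ.le_apply
        have : (m:ℝ) ≤ (φ m : ℝ) := Nat.cast_le.mpr h9
        linarith
      apply div_le_div_of_nonneg_left hx₀.le (by positivity)
      nlinarith
    have hptF : ∀ n, Tendsto (fun m => (u (φ m) n).1) atTop (𝓝 ((v n).1)) := by
      intro n
      exact (continuous_fst.tendsto (v n)).comp (tendsto_pi_nhds.mp hlim n)
    have hptG : ∀ n, Tendsto (fun m => (u (φ m) n).2) atTop (𝓝 ((v n).2)) := by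
      intro n
      exact (continuous_snd.tendsto (v n)).comp (tendsto_pi_nhds.mp hlim n)
    set Fφ : ℕ → ℝ × ℝ → ℝ := fun m p =>
      ∫ z in (0:ℝ)..p.1, k ⌊z / εs m⌋₊ ⌊p.2 / εs m⌋₊ / εs m with hFφ
    set Gφ : ℕ → ℝ × ℝ → ℝ := fun m p =>
      ∫ z in (0:ℝ)..p.1,
        ∫ w in (0:ℝ)..z, k ⌊w / εs m⌋₊ ⌊p.2 / εs m⌋₊ / εs m with hGφ
    have hFφd : ∀ m n, Fφ m (d n) = (u (φ m) n).1 := fun m n => rfl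
    have hGφd : ∀ m n, Gφ m (d n) = (u (φ m) n).2 := fun m n => rfl
    have hdx : ∀ (n : ℕ) (p : ℝ × ℝ), |(d n).1 - p.1| ≤ dist (d n) p := by
      intro n p
      rw [Prod.dist_eq, ← Real.dist_eq]
      exact le_max_left _ _
    have hdy : ∀ (n : ℕ) (p : ℝ × ℝ), |(d n).2 - p.2| ≤ dist (d n) p := by
      intro n p
      rw [Prod.dist_eq, ← Real.dist_eq]
      exact le_max_right _ _
    have hucF : ∀ R : ℝ, 0 < R →
        UniformCauchySeqOn Fφ atTop (Set.Icc 0 R ×ˢ Set.Icc x₀ R) := by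
      intro R hR
      refine uniformCauchy_of_modulus (isCompact_Icc.prod isCompact_Icc)
        (C := 2 * (2 * K / x₀)) (by positivity)
        (δ := fun m => 8 * (K / x₀) * εs m) ?_
        (fun p hp r hr => hdense p hp.1.1 hp.2.1 r hr) ?_
        (fun n => ⟨(v n).1, by simpa [hFφd] using hptF n⟩)
      · simpa using hεstend.const_mul (8 * (K / x₀))
      · intro m p hp n hd1
        have hp2 : x₀ ≤ p.2 := hp.2.1
        have hq1 : 0 ≤ (d n).1 := (hdS n).1
        have hq2 : x₀ ≤ (d n).2 := (hdS n).2
        have h1 : |Fφ m p - Fφ m ((d n).1, p.2)| ≤ 2 * K / x₀ * |p.1 - (d n).1| :=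
          F_diff_x hK hx₀ hk0 hksupp hkstrong1 hkstrong2 (hεspos m) hp2 p.1 (d n).1
        have h2 : |Fφ m ((d n).1, p.2) - Fφ m (d n)| ≤
            2 * K / x₀ * |p.2 - (d n).2| + 8 * (K / x₀) * εs m :=
          F_diff_y hK hx₀ hk0 hksupp hkstrong1 hkstrong2 (hεspos m) (hεsle m) hq1 hp2 hq2
        have htri := abs_sub_le (Fφ m p) (Fφ m ((d n).1, p.2)) (Fφ m (d n))
        have hdx' : |p.1 - (d n).1| ≤ dist (d n) p := by
          rw [abs_sub_comm]; exact hdx n p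
        have hdy' : |p.2 - (d n).2| ≤ dist (d n) p := by
          rw [abs_sub_comm]; exact hdy n p
        have hc : (0:ℝ) ≤ 2 * K / x₀ := by positivity
        have hb1 := mul_le_mul_of_nonneg_left hdx' hc
        have hb2 := mul_le_mul_of_nonneg_left hdy' hc
        nlinarith
    have hucG : ∀ R : ℝ, 0 < R →
        UniformCauchySeqOn Gφ atTop (Set.Icc 0 R ×ˢ Set.Icc x₀ R) := by
      intro R hR
      refine uniformCauchy_of_modulus (isCompact_Icc.prod isCompact_Icc)
        (C := 2 * (2 * K / x₀ * (R + 1))) (by positivity)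
        (δ := fun m => (R + 1) * (8 * (K / x₀) * εs m)) ?_
        (fun p hp r hr => hdense p hp.1.1 hp.2.1 r hr) ?_
        (fun n => ⟨(v n).2, by simpa [hGφd] using hptG n⟩)
      · simpa [mul_assoc] using hεstend.const_mul ((R + 1) * (8 * (K / x₀)))
      · intro m p hp n hd1
        have hp1 : 0 ≤ p.1 := hp.1.1
        have hp1R : p.1 ≤ R := hp.1.2
        have hp2 : x₀ ≤ p.2 := hp.2.1
        have hq1 : 0 ≤ (d n).1 := (hdS n).1
        have hq2 : x₀ ≤ (d n).2 := (hdS n).2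
        have hq1R : (d n).1 ≤ R + 1 := by
          have h := (abs_le.mp ((hdx n p).trans hd1)).2
          linarith
        have hpxabs : |p.1| ≤ R + 1 := by rw [abs_of_nonneg hp1]; linarith
        have hqxabs : |(d n).1| ≤ R + 1 := by rw [abs_of_nonneg hq1]; exact hq1R
        have h1 : |Gφ m p - Gφ m ((d n).1, p.2)| ≤
            2 * K / x₀ * (R + 1) * |p.1 - (d n).1| :=
          G_diff_x hK hx₀ hk0 hksupp hkstrong1 hkstrong2 (hεspos m) hp2 hpxabs hqxabs
        have h2 : |Gφ m ((d n).1, p.2) - Gφ m (d n)| ≤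
            (2 * K / x₀ * |p.2 - (d n).2| + 8 * (K / x₀) * εs m) * (d n).1 :=
          G_diff_y hK hx₀ hk0 hksupp hkstrong1 hkstrong2 (hεspos m) (hεsle m) hq1 hp2 hq2
        have htri := abs_sub_le (Gφ m p) (Gφ m ((d n).1, p.2)) (Gφ m (d n))
        have hdx' : |p.1 - (d n).1| ≤ dist (d n) p := by
          rw [abs_sub_comm]; exact hdx n p
        have hdy' : |p.2 - (d n).2| ≤ dist (d n) p := by
          rw [abs_sub_comm]; exact hdy n p
        have hdnn : (0:ℝ) ≤ dist (d n) p := dist_nonneg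
        have hc : (0:ℝ) ≤ 2 * K / x₀ := by positivity
        have hc8 : (0:ℝ) ≤ 8 * (K / x₀) * εs m := by positivity
        have hb2 := mul_le_mul_of_nonneg_left hdy' hc
        have h2' : (2 * K / x₀ * |p.2 - (d n).2| + 8 * (K / x₀) * εs m) * (d n).1 ≤
            (2 * K / x₀ * dist (d n) p + 8 * (K / x₀) * εs m) * (R + 1) := by
          apply mul_le_mul (by linarith) hq1R hq1 (by positivity)
        have h1' : 2 * K / x₀ * (R + 1) * |p.1 - (d n).1| ≤
            2 * K / x₀ * (R + 1) * dist (d n) p :=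
          mul_le_mul_of_nonneg_left hdx' (by positivity)
        nlinarith
    have hexF : ∀ p : ℝ × ℝ, 0 ≤ p.1 → x₀ ≤ p.2 →
        ∃ l, Tendsto (fun m => Fφ m p) atTop (𝓝 l) := by
      intro p hp1 hp2
      have hRpos : 0 < max p.1 p.2 := lt_of_lt_of_le hx₀ (le_trans hp2 (le_max_right _ _))
      have hpmem : p ∈ Set.Icc (0:ℝ) (max p.1 p.2) ×ˢ Set.Icc x₀ (max p.1 p.2) :=
        ⟨⟨hp1, le_max_left _ _⟩, ⟨hp2, le_max_right _ _⟩⟩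
      exact cauchySeq_tendsto_of_complete ((hucF _ hRpos).cauchySeq hpmem)
    have hexG : ∀ p : ℝ × ℝ, 0 ≤ p.1 → x₀ ≤ p.2 →
        ∃ l, Tendsto (fun m => Gφ m p) atTop (𝓝 l) := by
      intro p hp1 hp2
      have hRpos : 0 < max p.1 p.2 := lt_of_lt_of_le hx₀ (le_trans hp2 (le_max_right _ _))
      have hpmem : p ∈ Set.Icc (0:ℝ) (max p.1 p.2) ×ˢ Set.Icc x₀ (max p.1 p.2) :=
        ⟨⟨hp1, le_max_left _ _⟩, ⟨hp2, le_max_right _ _⟩⟩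
      exact cauchySeq_tendsto_of_complete ((hucG _ hRpos).cauchySeq hpmem)
    set Flim : ℝ × ℝ → ℝ := fun p =>
      if h : ∃ l, Tendsto (fun m => Fφ m p) atTop (𝓝 l) then h.choose else 0 with hFlim
    set Glim : ℝ × ℝ → ℝ := fun p =>
      if h : ∃ l, Tendsto (fun m => Gφ m p) atTop (𝓝 l) then h.choose else 0 with hGlim
    have hFlimt : ∀ p : ℝ × ℝ, 0 ≤ p.1 → x₀ ≤ p.2 →
        Tendsto (fun m => Fφ m p) atTop (𝓝 (Flim p)) := by
      intro p hp1 hp2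
      have h := hexF p hp1 hp2
      simp only [hFlim, dif_pos h]
      exact h.choose_spec
    have hGlimt : ∀ p : ℝ × ℝ, 0 ≤ p.1 → x₀ ≤ p.2 →
        Tendsto (fun m => Gφ m p) atTop (𝓝 (Glim p)) := by
      intro p hp1 hp2
      have h := hexG p hp1 hp2
      simp only [hGlim, dif_pos h]
      exact h.choose_spec
    refine ⟨εs, fun a b => Flim (a, b), fun a b => Glim (a, b), hεspos, hεstend, ?_⟩
    intro R hR
    constructor
    · exact (hucF R hR).tendstoUniformlyOn_of_tendsto
        (fun p hp => hFlimt p hp.1.1 hp.2.1)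
    · exact (hucG R hR).tendstoUniformlyOn_of_tendsto
        (fun p hp => hGlimt p hp.1.1 hp.2.1)
end
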